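/- arXiv:1510.06094 — 9 statements merged into one kernel-verified Lean document; each statement's English description precedes it below -/
import Mathlib

section
/- Let k = 2K+1 ≥ 5 be an odd integer. Let D be the (K-1)×(K-1) rational matrix with entries D_{r,s} = (-2/(2s-1)) · ∑_{n=0}^{k-2s} C(k-2r-1, k-2s-n) · C(n+2s-2, n) · B_n for 1 ≤ r, s ≤ K-1. Then D is a two-sided inverse of 𝒞, i.e. 𝒞 · D = I and D · 𝒞 = I, where I is the (K-1)×(K-1) identity matrix. (In particular, (𝒞^{-1})_{r,s} = D_{r,s}.) -/
namespace ZagierAux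

open Polynomial Finset


noncomputable def Ee (α M : ℕ) (V : Polynomial ℚ) : ℚ :=
  ∑ n ∈ Finset.range (M+1), ((n+α).choose n : ℚ) * _root_.bernoulli n * V.coeff (M - n)

noncomputable def ph (α M i : ℕ) : ℚ :=
  if i ≤ M then ((M - i + α).choose (M - i) : ℚ) * _root_.bernoulli (M - i) else 0

lemma bernoulli_odd (n : ℕ) (h : Odd n) (h3 : 3 ≤ n) : _root_.bernoulli n = 0 := by
  rw [bernoulli_eq_bernoulli'_of_ne_one (by omega), bernoulli'_eq_zero_of_odd h (by omega)]

lemma tri (α n m : ℕ) (h : n ≤ m) :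
    ((n+α).choose n : ℚ) * ((m+α).choose (m-n) : ℚ)
      = ((m+α).choose m : ℚ) * (m.choose n : ℚ) := by
  have h1 := Nat.choose_mul (n := m + α) (k := m) (show m - n ≤ m by omega)
  rw [show m - (m - n) = n by omega, show m + α - (m - n) = n + α by omega] at h1
  rw [Nat.choose_symm h] at h1
  have h2 : ((m + α).choose (m-n) : ℚ) * ((n + α).choose n : ℚ)
      = ((m + α).choose m : ℚ) * (m.choose n : ℚ) := by exact_mod_cast h1.symm
  linear_combination h2

lemma Slem (α m : ℕ) :
    ∑ n ∈ range (m+1), ((n+α).choose n : ℚ) * _root_.bernoulli n * ((m+α).choose (m-n) : ℚ)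
      = ((m+α).choose m : ℚ) * (_root_.bernoulli m + if m = 1 then 1 else 0) := by
  have key : ∀ n ∈ range (m+1),
      ((n+α).choose n : ℚ) * _root_.bernoulli n * ((m+α).choose (m-n) : ℚ)
        = ((m+α).choose m : ℚ) * ((m.choose n : ℚ) * _root_.bernoulli n) := by
    intro n hn
    have hn' : n ≤ m := by simpa [Nat.lt_succ_iff] using mem_range.mp hn
    have := tri α n m hn'
    linear_combination _root_.bernoulli n * this
  rw [Finset.sum_congr rfl key, ← Finset.mul_sum, Finset.sum_range_succ, _root_.sum_bernoulli]
  rw [Nat.choose_self]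
  push_cast
  ring



lemma Ee_X_pow (α M j : ℕ) : Ee α M (X ^ j) = ph α M j := by
  unfold Ee ph
  simp_rw [coeff_X_pow]
  rcases le_or_gt j M with hj | hj
  · rw [Finset.sum_eq_single_of_mem (M - j) (mem_range.mpr (by omega))
      (fun n hn hne => by rw [if_neg (by simp at hn; omega), mul_zero])]
    rw [if_pos (by omega), if_pos hj, mul_one]
  · rw [if_neg (by omega)]
    refine Finset.sum_eq_zero fun n hn => ?_
    rw [if_neg (by simp at hn; omega), mul_zero]

lemma Ee_shift (α M j : ℕ) (hM : 1 ≤ M) (hj : j ≤ M + α) :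
    Ee α M ((X+1) ^ (M + α - j) * X ^ j)
      = ph α M j + ((α : ℚ) + 1) * (if j = M - 1 then 1 else 0) := by
  unfold Ee ph
  simp_rw [coeff_mul_X_pow', coeff_X_add_one_pow, mul_ite, mul_zero]
  rcases le_or_gt j M with h | h
  · rw [← Finset.sum_filter, show Finset.filter (fun n => j ≤ M - n) (range (M+1))
        = range (M - j + 1) by ext n; simp [mem_filter, mem_range]; omega]
    have hcong : ∀ n ∈ range (M - j + 1),
        ((n+α).choose n : ℚ) * _root_.bernoulli n * (((M + α - j).choose (M - n - j)) : ℚ)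
          = ((n+α).choose n : ℚ) * _root_.bernoulli n * ((((M-j)+α).choose ((M-j) - n)) : ℚ) := by
      intro n hn
      simp only [mem_range] at hn
      congr 3 <;> omega
    rw [Finset.sum_congr rfl hcong, Slem α (M - j), if_pos h]
    rcases eq_or_ne j (M-1) with hj1 | hj1
    · rw [if_pos hj1, if_pos (by omega), hj1, show M - (M-1) = 1 by omega,
        Nat.choose_one_right]
      push_cast
      ring
    · rw [if_neg hj1, if_neg (by omega)]
      ring
  · rw [if_neg (by omega), if_neg (by omega)]
    rw [Finset.sum_eq_zero fun n hn => by rw [if_neg (by simp at hn; omega)]]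
    ring

lemma star (α M i : ℕ) (hM : Odd M) (h3 : 3 ≤ M) :
    (1 + (-1 : ℚ)^i) * ph α M i = -((α:ℚ)+1) * (if i = M - 1 then 1 else 0) := by
  unfold ph
  rcases le_or_gt i M with h | h
  · rcases eq_or_ne i (M-1) with h1 | h1
    · have he : Even i := by
        obtain ⟨k, hk⟩ := hM; subst h1; exact ⟨k, by omega⟩
      rw [if_pos h, if_pos h1, he.neg_one_pow, h1, show M - (M-1) = 1 by omega,
        Nat.choose_one_right, _root_.bernoulli_one]
      push_cast
      ring
    · rw [if_pos h, if_neg h1]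
      rcases Nat.even_or_odd i with he | ho
      · have hodd : Odd (M - i) := Nat.Odd.sub_even h hM he
        have h3' : 3 ≤ M - i := by
          obtain ⟨k, hk⟩ := hodd; omega
        rw [bernoulli_odd _ hodd h3']
        ring
      · rw [ho.neg_one_pow]
        ring
  · rw [if_neg (by omega), if_neg (by omega)]
    ring

lemma Ee_sum {ι : Type*} (α M : ℕ) (s : Finset ι) (g : ι → Polynomial ℚ) :
    Ee α M (∑ i ∈ s, g i) = ∑ i ∈ s, Ee α M (g i) := by
  unfold Ee
  simp_rw [Polynomial.finset_sum_coeff, Finset.mul_sum]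
  exact Finset.sum_comm

lemma Ee_C_mul (α M : ℕ) (c : ℚ) (V : Polynomial ℚ) :
    Ee α M (Polynomial.C c * V) = c * Ee α M V := by
  unfold Ee
  simp_rw [coeff_C_mul, Finset.mul_sum]
  exact Finset.sum_congr rfl fun n _ => by ring

lemma Ee_add (α M : ℕ) (V W : Polynomial ℚ) : Ee α M (V + W) = Ee α M V + Ee α M W := by
  unfold Ee
  simp_rw [coeff_add, mul_add]
  exact Finset.sum_add_distrib

lemma Ee_sub (α M : ℕ) (V W : Polynomial ℚ) : Ee α M (V - W) = Ee α M V - Ee α M W := by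
  unfold Ee
  simp_rw [coeff_sub, mul_sub]
  rw [Finset.sum_sub_distrib]

lemma Ee_one (α M : ℕ) (hM : Odd M) (h3 : 3 ≤ M) : Ee α M 1 = 0 := by
  unfold Ee
  refine Finset.sum_eq_zero fun n hn => ?_
  simp only [coeff_one, mem_range] at hn ⊢
  rcases eq_or_ne n M with h | h
  · rw [h, bernoulli_odd M hM h3]
    ring
  · rw [if_neg (by omega), mul_zero]



lemma PI2 (e : ℕ) : ((X : Polynomial ℚ)+2)^e
    = ∑ i ∈ range (e+1), Polynomial.C ((e.choose i : ℚ) * 2^(e-i)) * X^i := by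
  rw [add_pow]
  refine Finset.sum_congr rfl fun i hi => ?_
  simp only [map_mul, map_pow, map_ofNat, C_eq_natCast, map_natCast]
  ring

lemma PI1 (e f : ℕ) : ((X : Polynomial ℚ)+2)^e * (X+1)^f
    = ∑ i ∈ range (e+1),
        Polynomial.C ((e.choose i : ℚ) * (-1)^i * 2^(e-i)) * ((X+1)^(e - i + f) * X^i) := by
  have h := add_pow (-X : Polynomial ℚ) (2*(X+1)) e
  rw [show (-X + 2*((X : Polynomial ℚ)+1)) = X + 2 by ring] at h
  rw [h, Finset.sum_mul]
  refine Finset.sum_congr rfl fun i hi => ?_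
  have hi' : i ≤ e := by simpa [Nat.lt_succ_iff] using mem_range.mp hi
  rw [pow_add, mul_pow]
  simp only [map_mul, map_pow, map_neg, map_one, map_ofNat, C_eq_natCast, map_natCast]
  ring

lemma pair_sum (N : ℕ) (g : ℕ → Polynomial ℚ) :
    ∑ i ∈ range (2*N), g i = ∑ r ∈ range N, (g (2*r) + g (2*r+1)) := by
  induction N with
  | zero => simp
  | succ n ih =>
    rw [show 2*(n+1) = (2*n+1)+1 by ring, Finset.sum_range_succ, Finset.sum_range_succ,
      Finset.sum_range_succ, ih]
    ring



lemma polyA (K e f : ℕ) (hK : 2 ≤ K) (he : e ≤ 2*K-2) (hef : e + f = 2*K-1) :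
    ∑ r ∈ range (K-1), Polynomial.C (2 * (e.choose (2*r+1) : ℚ)) * (X+1)^(2*K-2*r-2)
      = (((X : Polynomial ℚ)+2)^e - X^e) * (X+1)^f := by
  set h : ℕ → Polynomial ℚ :=
    fun i => Polynomial.C ((e.choose i : ℚ) * (1 - (-1)^i)) * (X+1)^(2*K-1-i) with hh
  have step1 : ∑ i ∈ range (e+1), h i = (((X : Polynomial ℚ)+2)^e - X^e) * (X+1)^f := by
    have hA := add_pow (1 : Polynomial ℚ) (X+1) e
    have hB := add_pow (-1 : Polynomial ℚ) (X+1) e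
    rw [show (1 + ((X : Polynomial ℚ)+1)) = X+2 by ring] at hA
    rw [show (-1 + ((X : Polynomial ℚ)+1)) = X by ring] at hB
    rw [hA, hB, ← Finset.sum_sub_distrib, Finset.sum_mul]
    refine Finset.sum_congr rfl fun i hi => ?_
    have hi' : i ≤ e := by simpa [Nat.lt_succ_iff] using mem_range.mp hi
    simp only [hh]
    rw [show 2*K-1-i = (e-i)+f by omega, pow_add]
    simp only [map_mul, map_sub, map_pow, map_neg, map_one, C_eq_natCast, map_natCast]
    ring
  have step2 : ∑ i ∈ range (2*K-1), h i = ∑ i ∈ range (e+1), h i := by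
    symm
    refine Finset.sum_subset (by rw [Finset.range_subset_range]; omega) fun i hi1 hi2 => ?_
    simp only [mem_range] at hi1 hi2
    simp [hh, Nat.choose_eq_zero_of_lt (show e < i by omega)]
  have step3 : ∑ i ∈ range (2*K-1), h i
      = ∑ r ∈ range (K-1), Polynomial.C (2 * (e.choose (2*r+1) : ℚ)) * (X+1)^(2*K-2*r-2) := by
    rw [show 2*K-1 = 2*(K-1)+1 by omega, Finset.sum_range_succ, pair_sum]
    have hlast : h (2*(K-1)) = 0 := by
      simp [hh, Even.neg_one_pow (⟨K-1, by ring⟩ : Even (2*(K-1)))]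
    rw [hlast, add_zero]
    refine Finset.sum_congr rfl fun r hr => ?_
    have h2r : h (2*r) = 0 := by
      simp [hh, Even.neg_one_pow (⟨r, by ring⟩ : Even (2*r))]
    rw [h2r, zero_add]
    simp only [hh]
    rw [Odd.neg_one_pow (⟨r, by ring⟩ : Odd (2*r+1)),
      show 2*K-1-(2*r+1) = 2*K-2*r-2 by omega]
    norm_num
    exact Or.inl (mul_comm _ _)
  rw [← step3, step2, step1]

lemma polyB (K e : ℕ) (hK : 2 ≤ K) (he : e ≤ 2*K-2) (heven : Even e) :
    ∑ r ∈ range (K-1), Polynomial.C (2 * (e.choose (2*K-2*r-2) : ℚ)) * (X+1)^(2*K-2*r-2)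
      = ((X : Polynomial ℚ)+2)^e + X^e - 2 := by
  set h : ℕ → Polynomial ℚ :=
    fun i => Polynomial.C ((e.choose i : ℚ) * (1 + (-1)^i)) * (X+1)^i with hh
  have step1 : ∑ i ∈ range (e+1), h i = ((X : Polynomial ℚ)+2)^e + X^e := by
    have hA := add_pow ((X : Polynomial ℚ)+1) 1 e
    have hB := add_pow ((X : Polynomial ℚ)+1) (-1) e
    rw [show (((X : Polynomial ℚ)+1) + 1) = X+2 by ring] at hA
    rw [show (((X : Polynomial ℚ)+1) + -1) = X by ring] at hB
    rw [hA, hB, ← Finset.sum_add_distrib]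
    refine Finset.sum_congr rfl fun i hi => ?_
    have hi' : i ≤ e := by simpa [Nat.lt_succ_iff] using mem_range.mp hi
    have hpar : ((-1 : Polynomial ℚ))^(e-i) = (-1)^i := by
      rcases Nat.even_or_odd i with hp | hp
      · rw [hp.neg_one_pow, Even.neg_one_pow ((Nat.even_sub hi').mpr (iff_of_true heven hp))]
      · rw [hp.neg_one_pow, (Nat.Even.sub_odd hi' heven hp).neg_one_pow]
    simp only [hh]
    rw [hpar]
    simp only [map_mul, map_add, map_pow, map_neg, map_one, C_eq_natCast, map_natCast]
    ring
  have step2 : ∑ i ∈ range (2*K-1), h i = ∑ i ∈ range (e+1), h i := by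
    symm
    refine Finset.sum_subset (by rw [Finset.range_subset_range]; omega) fun i hi1 hi2 => ?_
    simp only [mem_range] at hi1 hi2
    simp [hh, Nat.choose_eq_zero_of_lt (show e < i by omega)]
  have step3 : ∑ i ∈ range (2*K-1), h i
      = (∑ r ∈ range (K-1), h (2*r+2)) + 2 := by
    rw [show 2*K-1 = (2*(K-1))+1 by omega, Finset.sum_range_succ', pair_sum]
    have h0 : h 0 = 2 := by simp [hh]; norm_num
    rw [h0]
    congr 1
    refine Finset.sum_congr rfl fun r hr => ?_
    have hodd : h (2*r+1) = 0 := by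
      simp [hh, Odd.neg_one_pow (⟨r, by ring⟩ : Odd (2*r+1))]
    rw [show 2*r+1+1 = 2*r+2 by ring, hodd, zero_add]
  have step4 : ∑ r ∈ range (K-1), Polynomial.C (2 * (e.choose (2*K-2*r-2) : ℚ)) * (X+1)^(2*K-2*r-2)
      = ∑ r ∈ range (K-1), h (2*r+2) := by
    have hrefl := Finset.sum_range_reflect (fun r => h (2*r+2)) (K-1)
    rw [← hrefl]
    refine Finset.sum_congr rfl fun j hj => ?_
    simp only [mem_range] at hj
    simp only [hh]
    have harg : 2*(K-1-1-j)+2 = 2*K-2*j-2 := by omega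
    rw [harg, Even.neg_one_pow (⟨K-j-1, by omega⟩ : Even (2*K-2*j-2))]
    norm_num
    exact Or.inl (mul_comm _ _)
  rw [step4, ← add_sub_cancel_right (∑ r ∈ range (K-1), h (2*r+2)) 2, ← step3, step2, step1]


lemma EW1 (α M e f : ℕ) (hM : Odd M) (h3 : 3 ≤ M) (hef : e + f = M + α) :
    Ee α M (((X : Polynomial ℚ)+2)^e * (X+1)^f) + Ee α M (((X : Polynomial ℚ)+2)^e) = 0 := by
  rw [PI1 e f, PI2 e, Ee_sum, Ee_sum]
  have h1 : ∀ i ∈ range (e+1),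
      Ee α M (Polynomial.C ((e.choose i : ℚ) * (-1)^i * 2^(e-i)) * ((X+1)^(e-i+f) * X^i))
        = ((e.choose i : ℚ) * (-1)^i * 2^(e-i))
            * (ph α M i + ((α:ℚ)+1) * (if i = M-1 then 1 else 0)) := by
    intro i hi
    simp only [mem_range] at hi
    rw [Ee_C_mul, show e-i+f = M+α-i by omega, Ee_shift α M i (by omega) (by omega)]
  have h2 : ∀ i ∈ range (e+1),
      Ee α M (Polynomial.C ((e.choose i : ℚ) * 2^(e-i)) * X^i)
        = ((e.choose i : ℚ) * 2^(e-i)) * ph α M i := by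
    intro i hi
    rw [Ee_C_mul, Ee_X_pow]
  rw [Finset.sum_congr rfl h1, Finset.sum_congr rfl h2, ← Finset.sum_add_distrib]
  refine Finset.sum_eq_zero fun i hi => ?_
  have hstar := star α M i hM h3
  rcases eq_or_ne i (M-1) with hcase | hcase
  · have hev : Even i := by
      obtain ⟨k, hk⟩ := hM
      exact ⟨k, by omega⟩
    rw [hcase, if_pos rfl] at hstar ⊢
    rw [← hcase, hev.neg_one_pow] at hstar ⊢
    linear_combination ((e.choose i : ℚ) * 2^(e-i)) * hstar
  · rw [if_neg hcase] at hstar ⊢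
    linear_combination ((e.choose i : ℚ) * 2^(e-i)) * hstar

lemma EW2 (α M e f : ℕ) (hM1 : 1 ≤ M) (hef : e + f = M + α) :
    Ee α M ((X+1)^f * X^e) - Ee α M (X^e) = ((α:ℚ)+1) * (if e = M-1 then 1 else 0) := by
  rw [show f = M + α - e by omega, Ee_shift α M e hM1 (by omega), Ee_X_pow]
  ring

noncomputable def Gpoly (K e : ℕ) : Polynomial ℚ :=
  ∑ r ∈ range (K-1),
    Polynomial.C ((e.choose (2*r+1) : ℚ) + (e.choose (2*K-2*r-2) : ℚ)) * (X+1)^(2*K-2*r-2)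

lemma Gpoly_coeff (K e k : ℕ) : (Gpoly K e).coeff k
    = ∑ r ∈ range (K-1),
        ((e.choose (2*r+1) : ℚ) + (e.choose (2*K-2*r-2) : ℚ)) * ((2*K-2*r-2).choose k : ℚ) := by
  unfold Gpoly
  rw [Polynomial.finset_sum_coeff]
  exact Finset.sum_congr rfl fun r _ => by rw [coeff_C_mul, coeff_X_add_one_pow]

lemma EeG (K σ τ : ℕ) (hK : 2 ≤ K) (hσ : σ < K-1) (hτ : τ < K-1) :
    Ee (2*τ) (2*K-1-2*τ) (Gpoly K (2*K-2*σ-2))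
      = -((2*(τ:ℚ)+1))/2 * (if σ = τ then 1 else 0) := by
  set α := 2*τ with hα
  set M := 2*K-1-2*τ with hM
  set e := 2*K-2*σ-2 with he
  set f := 2*σ+1 with hf
  have hModd : Odd M := ⟨K-1-τ, by omega⟩
  have h3M : 3 ≤ M := by omega
  have hef : e + f = M + α := by omega
  have hG2 : Polynomial.C 2 * Gpoly K e
      = (((X : Polynomial ℚ)+2)^e - X^e)*(X+1)^f + (((X : Polynomial ℚ)+2)^e + X^e - 2) := by
    rw [← polyA K e f hK (by omega) (by omega), ← polyB K e hK (by omega) ⟨K-σ-1, by omega⟩]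
    unfold Gpoly
    rw [Finset.mul_sum, ← Finset.sum_add_distrib]
    refine Finset.sum_congr rfl fun r _ => ?_
    rw [Polynomial.C_add, Polynomial.C_mul, Polynomial.C_mul]
    ring
  have expand : (((X : Polynomial ℚ)+2)^e - X^e)*(X+1)^f + (((X : Polynomial ℚ)+2)^e + X^e - 2)
      = (((X : Polynomial ℚ)+2)^e*(X+1)^f + ((X : Polynomial ℚ)+2)^e)
          - ((X+1)^f * X^e - X^e) - Polynomial.C 2 * 1 := by
    rw [map_ofNat Polynomial.C 2]
    ring
  have hkey : Ee α M (Polynomial.C 2 * Gpoly K e) = -((α:ℚ)+1) * (if e = M-1 then 1 else 0) := by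
    rw [hG2, expand, Ee_sub, Ee_sub, Ee_sub, Ee_add, Ee_C_mul, Ee_one α M hModd h3M]
    have h1 := EW1 α M e f hModd h3M hef
    have h2 := EW2 α M e f (by omega) hef
    linear_combination h1 - h2
  rw [Ee_C_mul] at hkey
  have hiff : (e = M-1) = (σ = τ) := by
    simp only [eq_iff_iff]
    omega
  simp only [hiff] at hkey
  have hcast : ((α:ℕ):ℚ) = 2*(τ:ℚ) := by rw [hα]; push_cast; ring
  linear_combination hkey/2 - ((if σ = τ then (1:ℚ) else 0)/2) * hcast

end ZagierAux

open ZagierAux in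
/-- **Inverse of the Zagier matrix 𝒞, first expression.**
For odd `k = 2K+1 ≥ 5`, the matrix `D` with entries
`D_{r,s} = (-2/(2s-1)) · ∑_{n=0}^{k-2s} C(k-2r-1, k-2s-n) · C(n+2s-2, n) · B_n`
is a two-sided inverse of the matrix `𝒞` with entries
`𝒞_{s,r} = C(2K-2s, 2r-1) + C(2K-2s, 2K-2r)` (indices `1 ≤ s, r ≤ K-1`). -/
theorem zagier_matrix_inverse_first_expression (K : ℕ) (hK : 2 ≤ K)
    (C D : Matrix (Fin (K - 1)) (Fin (K - 1)) ℚ)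
    (hC : ∀ s r : Fin (K - 1),
      C s r = (Nat.choose (2 * K - 2 * (s.1 + 1)) (2 * (r.1 + 1) - 1) : ℚ)
        + (Nat.choose (2 * K - 2 * (s.1 + 1)) (2 * K - 2 * (r.1 + 1)) : ℚ))
    (hD : ∀ r s : Fin (K - 1),
      D r s = (-2 / (2 * ((s.1 : ℚ) + 1) - 1)) *
        ∑ n ∈ Finset.range (2 * K + 1 - 2 * (s.1 + 1) + 1),
          (Nat.choose (2 * K + 1 - 2 * (r.1 + 1) - 1) (2 * K + 1 - 2 * (s.1 + 1) - n) : ℚ)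
            * (Nat.choose (n + 2 * (s.1 + 1) - 2) n : ℚ) * bernoulli n) :
    C * D = 1 ∧ D * C = 1 := by
  have hCD : C * D = 1 := by
    ext s t
    have hs : s.1 < K - 1 := s.isLt
    have ht : t.1 < K - 1 := t.isLt
    rw [Matrix.mul_apply, Matrix.one_apply]
    have hr_eq : ∀ r : Fin (K-1), C s r * D r t
        = (-2/((2*(t.1:ℚ))+1)) * ∑ n ∈ Finset.range ((2*K-1-2*t.1)+1),
            (((2*K-2*s.1-2).choose (2*r.1+1) : ℚ) + ((2*K-2*s.1-2).choose (2*K-2*r.1-2) : ℚ))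
              * (((n+2*t.1).choose n : ℚ) * _root_.bernoulli n
                  * (((2*K-2*r.1-2).choose ((2*K-1-2*t.1) - n) : ℚ))) := by
      intro r
      have hrlt : r.1 < K - 1 := r.isLt
      rw [hC s r, hD r t]
      simp only [show 2*K-2*(s.1+1) = 2*K-2*s.1-2 from by omega,
        show 2*(r.1+1)-1 = 2*r.1+1 from by omega,
        show 2*K-2*(r.1+1) = 2*K-2*r.1-2 from by omega,
        show 2*K+1-2*(r.1+1)-1 = 2*K-2*r.1-2 from by omega,
        show 2*K+1-2*(t.1+1) = 2*K-1-2*t.1 from by omega]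
      rw [mul_left_comm]
      congr 1
      · push_cast
        ring
      · rw [Finset.mul_sum]
        refine Finset.sum_congr rfl fun n hn => ?_
        rw [show n+2*(t.1+1)-2 = n+2*t.1 from by omega]
        ring
    rw [Finset.sum_congr rfl (fun r _ => hr_eq r), ← Finset.mul_sum]
    rw [Fin.sum_univ_eq_sum_range (fun rv => ∑ n ∈ Finset.range ((2*K-1-2*t.1)+1),
            (((2*K-2*s.1-2).choose (2*rv+1) : ℚ) + ((2*K-2*s.1-2).choose (2*K-2*rv-2) : ℚ))
              * (((n+2*t.1).choose n : ℚ) * _root_.bernoulli n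
                  * (((2*K-2*rv-2).choose ((2*K-1-2*t.1) - n) : ℚ)))) (K-1)]
    rw [Finset.sum_comm]
    have hinner : ∀ n ∈ Finset.range ((2*K-1-2*t.1)+1),
        (∑ rv ∈ Finset.range (K-1),
          (((2*K-2*s.1-2).choose (2*rv+1) : ℚ) + ((2*K-2*s.1-2).choose (2*K-2*rv-2) : ℚ))
            * (((n+2*t.1).choose n : ℚ) * _root_.bernoulli n
                * (((2*K-2*rv-2).choose ((2*K-1-2*t.1) - n) : ℚ))))
          = ((n+2*t.1).choose n : ℚ) * _root_.bernoulli n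
              * (Gpoly K (2*K-2*s.1-2)).coeff ((2*K-1-2*t.1) - n) := by
      intro n hn
      rw [Gpoly_coeff, Finset.mul_sum]
      refine Finset.sum_congr rfl fun rv hrv => ?_
      ring
    rw [Finset.sum_congr rfl hinner]
    have : ∑ n ∈ Finset.range ((2*K-1-2*t.1)+1),
        ((n+2*t.1).choose n : ℚ) * _root_.bernoulli n
          * (Gpoly K (2*K-2*s.1-2)).coeff ((2*K-1-2*t.1) - n)
        = Ee (2*t.1) (2*K-1-2*t.1) (Gpoly K (2*K-2*s.1-2)) := rfl
    rw [this, EeG K s.1 t.1 hK hs ht]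
    have hiff : (s.1 = t.1) = (s = t) := by
      rw [eq_iff_iff, Fin.val_inj]
    simp only [hiff]
    have hne : (2*(t.1:ℚ)+1) ≠ 0 := by positivity
    split_ifs
    · field_simp
    · ring
  exact ⟨hCD, mul_eq_one_comm.mp hCD⟩
end

section
/- Let k = 2K+1 ≥ 5 be an odd integer. Let D' be the (K-1)×(K-1) rational matrix with entries D'_{r,s} = (2/(2s-1)) · ∑_{n=0}^{k-2s} C(2r-1, k-2s-n) · C(n+2s-2, n) · B_n for 1 ≤ r, s ≤ K-1. Then D' is a two-sided inverse of 𝒞, i.e. 𝒞 · D' = I and D' · 𝒞 = I, where I is the (K-1)×(K-1) identity matrix. (In particular, (𝒞^{-1})_{r,s} = D'_{r,s}.) -/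
open Finset

private def GGz (q m x : ℕ) : ℚ :=
  ∑ n ∈ Finset.range (m + 1),
    (x.choose (m - n) : ℚ) * ((n + q - 1).choose n : ℚ) * bernoulli n

private lemma GGz_rec (q m x : ℕ) : GGz q (m+1) (x+1) = GGz q (m+1) x + GGz q m x := by
  unfold GGz
  rw [sum_range_succ, sum_range_succ
    (fun n => ((x.choose (m+1-n) : ℚ)) * ((n + q - 1).choose n : ℚ) * bernoulli n)]
  have h : ∀ n ∈ range (m+1),
      (((x+1).choose (m+1-n) : ℚ)) * ((n + q - 1).choose n : ℚ) * bernoulli n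
        = ((x.choose (m+1-n) : ℚ)) * ((n + q - 1).choose n : ℚ) * bernoulli n
          + ((x.choose (m-n) : ℚ)) * ((n + q - 1).choose n : ℚ) * bernoulli n := by
    intro n hn
    rw [mem_range] at hn
    have h1 : m + 1 - n = (m - n) + 1 := by omega
    rw [h1, Nat.choose_succ_succ, Nat.cast_add]
    ring
  rw [sum_congr rfl h, sum_add_distrib]
  simp
  ring

private lemma GGz_at_zero (q m : ℕ) : GGz q m 0 = ((m + q - 1).choose m : ℚ) * bernoulli m := by
  unfold GGz
  rw [Finset.sum_eq_single m]
  · simp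
  · intro n hn hne
    rw [mem_range] at hn
    have : (0:ℕ).choose (m - n) = 0 := Nat.choose_eq_zero_of_lt (by omega)
    simp [this]
  · intro h
    exact absurd (mem_range.mpr (Nat.lt_succ_self m)) h

private lemma sum_choose_bernoulli (m : ℕ) :
    (∑ n ∈ range (m+1), (m.choose n : ℚ) * bernoulli n) = (-1)^m * bernoulli m := by
  rw [sum_range_succ, sum_bernoulli]
  by_cases hm : m = 1
  · subst hm; norm_num [bernoulli_one]
  · rw [if_neg hm]
    rcases Nat.even_or_odd m with he | ho
    · rw [Even.neg_one_pow he]; simp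
    · have hb : bernoulli m = 0 := by
        rw [bernoulli_eq_bernoulli'_of_ne_one hm]
        obtain ⟨j, hj⟩ := ho
        exact bernoulli'_eq_zero_of_odd ⟨j, hj⟩ (by omega)
      simp [hb]

private lemma GGz_anchor (q m : ℕ) (hq : 1 ≤ q) :
    GGz q m (q + m - 1) = (-1)^m * ((q + m - 1).choose m : ℚ) * bernoulli m := by
  unfold GGz
  have h : ∀ n ∈ range (m+1),
      ((q + m - 1).choose (m - n) : ℚ) * ((n + q - 1).choose n : ℚ) * bernoulli n
        = ((q + m - 1).choose m : ℚ) * ((m.choose n : ℚ) * bernoulli n) := by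
    intro n hn
    rw [mem_range] at hn
    have hnm : n ≤ m := by omega
    have key : (q + m - 1).choose m * m.choose (m - n)
        = (q + m - 1).choose (m - n) * ((q + m - 1) - (m - n)).choose (m - (m - n)) :=
      Nat.choose_mul (by omega)
    rw [show (q + m - 1) - (m - n) = n + q - 1 by omega, show m - (m - n) = n by omega,
      Nat.choose_symm hnm] at key
    have := congrArg (fun z : ℕ => (z : ℚ)) key
    push_cast at this
    linear_combination (-(bernoulli n)) * this
  rw [sum_congr rfl h, ← mul_sum, sum_choose_bernoulli]
  ring

private lemma GGz_reflect (q : ℕ) (hq : 1 ≤ q) :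
    ∀ m x, x ≤ q + m - 1 → GGz q m x = (-1)^m * GGz q m (q + m - 1 - x) := by
  intro m
  induction m with
  | zero =>
    intro x _
    simp [GGz]
  | succ m ihm =>
    intro x
    induction x with
    | zero =>
      intro _
      rw [GGz_at_zero, Nat.sub_zero, GGz_anchor q (m+1) hq]
      rw [show ((m+1) + q - 1) = (q + (m+1) - 1) by omega]
      rw [← mul_assoc, ← mul_assoc, ← pow_add]
      rw [Even.neg_one_pow ⟨m+1, by ring⟩, one_mul]
    | succ x ihx =>
      intro hx
      have hx' : x ≤ q + (m+1) - 1 := by omega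
      have hxm : x ≤ q + m - 1 := by omega
      have h1 := GGz_rec q m x
      have h2 : GGz q (m+1) (q + m - x)
          = GGz q (m+1) (q + m - 1 - x) + GGz q m (q + m - 1 - x) := by
        have h := GGz_rec q m (q + m - 1 - x)
        rwa [show q + m - 1 - x + 1 = q + m - x by omega] at h
      have h3 := ihx hx'
      have h4 := ihm x hxm
      rw [show q + (m+1) - 1 - x = q + m - x by omega] at h3
      rw [show q + (m+1) - 1 - (x+1) = q + m - 1 - x by omega]
      have hp : ((-1:ℚ))^(m+1) = -(-1)^m := by rw [pow_succ]; ring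
      rw [hp] at h3 ⊢
      rw [h1, h3, h4]
      linear_combination (-(-1:ℚ)^m) * h2

private lemma alt_inner (N a : ℕ) :
    ∑ j ∈ range (N+1), (-1:ℚ)^j * (N.choose j : ℚ) * (j.choose a : ℚ)
      = if a = N then (-1)^N else 0 := by
  rcases le_or_gt a N with hle | hlt
  · have hsplit : ∑ j ∈ range (N+1), (-1:ℚ)^j * (N.choose j : ℚ) * (j.choose a : ℚ)
        = ∑ i ∈ range (N+1-a), (-1:ℚ)^(a+i) * (N.choose (a+i) : ℚ) * ((a+i).choose a : ℚ) := by
      have hz : ∑ j ∈ Ico 0 a, (-1:ℚ)^j * (N.choose j : ℚ) * (j.choose a : ℚ) = 0 := by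
        apply Finset.sum_eq_zero
        intro j hj
        rw [mem_Ico] at hj
        rw [Nat.choose_eq_zero_of_lt hj.2]
        simp
      conv_lhs => rw [range_eq_Ico,
        ← Finset.sum_Ico_consecutive _ (Nat.zero_le a) (show a ≤ N+1 by omega)]
      rw [hz, zero_add, Finset.sum_Ico_eq_sum_range]
    rw [hsplit]
    have hterm : ∀ i ∈ range (N+1-a),
        (-1:ℚ)^(a+i) * (N.choose (a+i) : ℚ) * ((a+i).choose a : ℚ)
          = ((-1:ℚ)^a * (N.choose a : ℚ)) * ((-1:ℚ)^i * ((N-a).choose i : ℚ)) := by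
      intro i hi
      rw [mem_range] at hi
      have key : N.choose (a+i) * (a+i).choose a = N.choose a * (N-a).choose i := by
        have := Nat.choose_mul (n := N) (show a ≤ a + i by omega)
        rwa [show a + i - a = i by omega] at this
      have keyq := congrArg (fun z : ℕ => (z : ℚ)) key
      push_cast at keyq
      rw [pow_add]
      linear_combination ((-1:ℚ)^a * (-1:ℚ)^i) * keyq
    rw [sum_congr rfl hterm, ← mul_sum]
    have halt : ∑ i ∈ range (N+1-a), (-1:ℚ)^i * ((N-a).choose i : ℚ)
        = if N - a = 0 then 1 else 0 := by
      have h := Int.alternating_sum_range_choose (n := N - a)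
      rw [show N + 1 - a = (N-a) + 1 by omega]
      exact_mod_cast h
    rw [halt]
    by_cases haN : a = N
    · subst haN; simp
    · rw [if_neg (by omega), if_neg haN]; ring
  · rw [if_neg (by omega)]
    apply Finset.sum_eq_zero
    intro j hj
    rw [mem_range] at hj
    rw [Nat.choose_eq_zero_of_lt (show j < a by omega)]
    ring

private lemma alt_sum (q m N : ℕ) :
    ∑ j ∈ range (N+1), (-1:ℚ)^j * (N.choose j : ℚ) * GGz q m j
      = (-1)^N * (if N ≤ m then ((m - N + q - 1).choose (m-N) : ℚ) * bernoulli (m-N) else 0) := by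
  unfold GGz
  have hswap : ∑ j ∈ range (N+1), (-1:ℚ)^j * (N.choose j : ℚ) *
      (∑ n ∈ range (m+1), (j.choose (m - n) : ℚ) * ((n + q - 1).choose n : ℚ) * bernoulli n)
      = ∑ n ∈ range (m+1), (((n + q - 1).choose n : ℚ) * bernoulli n) *
          (∑ j ∈ range (N+1), (-1:ℚ)^j * (N.choose j : ℚ) * (j.choose (m-n) : ℚ)) := by
    simp_rw [mul_sum]
    rw [Finset.sum_comm]
    apply Finset.sum_congr rfl; intro n _
    apply Finset.sum_congr rfl; intro j _
    ring
  rw [hswap]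
  simp_rw [alt_inner]
  by_cases hNm : N ≤ m
  · rw [if_pos hNm, Finset.sum_eq_single (m - N)]
    · rw [if_pos (show m - (m - N) = N by omega)]
      ring
    · intro n hn hne
      rw [mem_range] at hn
      rw [if_neg (by omega)]
      ring
    · intro h
      exact absurd (mem_range.mpr (by omega)) h
  · rw [if_neg hNm]
    rw [Finset.sum_eq_zero, mul_zero]
    intro n hn
    rw [mem_range] at hn
    rw [if_neg (by omega)]
    ring

private lemma sum_range_two_mul (n : ℕ) (g : ℕ → ℚ) :
    ∑ j ∈ range (2*n), g j = ∑ r ∈ range n, (g (2*r) + g (2*r+1)) := by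
  induction n with
  | zero => simp
  | succ n ih =>
    rw [show 2*(n+1) = (2*n+1)+1 by ring, sum_range_succ, sum_range_succ, ih, sum_range_succ]
    ring

private lemma bernoulli_odd_ge_three (m : ℕ) (hodd : Odd m) (hm : 3 ≤ m) : bernoulli m = 0 := by
  rw [bernoulli_eq_bernoulli'_of_ne_one (by omega)]
  exact bernoulli'_eq_zero_of_odd hodd (by omega)

private lemma entry_main (K a b : ℕ) (hK : 2 ≤ K) (ha : a + 1 ≤ K - 1) (hb : b + 1 ≤ K - 1) :
    ∑ i ∈ range (K-1),
      (((2*K-2*a-2).choose (2*i+1) : ℚ) + ((2*K-2*a-2).choose (2*K-2*i-2) : ℚ))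
        * ((2 / (2*(b:ℚ)+1)) * GGz (2*b+1) (2*K-2*b-1) (2*i+1))
      = if a = b then 1 else 0 := by
  have hm_odd : Odd (2*K-2*b-1) := ⟨K-b-1, by omega⟩
  have hm3 : 3 ≤ 2*K-2*b-1 := by omega
  -- pull out the scalar
  have hpull : ∀ i ∈ range (K-1),
      (((2*K-2*a-2).choose (2*i+1) : ℚ) + ((2*K-2*a-2).choose (2*K-2*i-2) : ℚ))
        * ((2 / (2*(b:ℚ)+1)) * GGz (2*b+1) (2*K-2*b-1) (2*i+1))
      = (2 / (2*(b:ℚ)+1)) *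
        ((((2*K-2*a-2).choose (2*i+1) : ℚ) + ((2*K-2*a-2).choose (2*K-2*i-2) : ℚ))
          * GGz (2*b+1) (2*K-2*b-1) (2*i+1)) := fun i _ => by ring
  rw [sum_congr rfl hpull, ← mul_sum]
  -- main sum computation
  have hT : ∑ i ∈ range (K-1),
      ((((2*K-2*a-2).choose (2*i+1) : ℚ) + ((2*K-2*a-2).choose (2*K-2*i-2) : ℚ))
          * GGz (2*b+1) (2*K-2*b-1) (2*i+1))
      = if a = b then (2*(b:ℚ)+1)/2 else 0 := by
    -- reflection
    have hrefl : ∀ i ∈ range (K-1),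
        GGz (2*b+1) (2*K-2*b-1) (2*i+1) = - GGz (2*b+1) (2*K-2*b-1) (2*K-2*i-2) := by
      intro i hi
      rw [mem_range] at hi
      have h := GGz_reflect (2*b+1) (by omega) (2*K-2*b-1) (2*i+1) (by omega)
      rw [show 2*b+1 + (2*K-2*b-1) - 1 - (2*i+1) = 2*K-2*i-2 by omega,
        Odd.neg_one_pow hm_odd] at h
      rw [h]; ring
    have hsplit : ∀ i ∈ range (K-1),
        ((((2*K-2*a-2).choose (2*i+1) : ℚ) + ((2*K-2*a-2).choose (2*K-2*i-2) : ℚ))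
          * GGz (2*b+1) (2*K-2*b-1) (2*i+1))
        = ((2*K-2*a-2).choose (2*i+1) : ℚ) * GGz (2*b+1) (2*K-2*b-1) (2*i+1)
          - ((2*K-2*a-2).choose (2*K-2*i-2) : ℚ) * GGz (2*b+1) (2*K-2*b-1) (2*K-2*i-2) := by
      intro i hi
      have h := hrefl i hi
      linear_combination (((2*K-2*a-2).choose (2*K-2*i-2) : ℚ)) * h
    rw [sum_congr rfl hsplit, sum_sub_distrib]
    -- reverse the second sum
    have hrev : ∑ i ∈ range (K-1),
        ((2*K-2*a-2).choose (2*K-2*i-2) : ℚ) * GGz (2*b+1) (2*K-2*b-1) (2*K-2*i-2)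
        = ∑ i ∈ range (K-1),
        ((2*K-2*a-2).choose (2*i+2) : ℚ) * GGz (2*b+1) (2*K-2*b-1) (2*i+2) := by
      rw [← Finset.sum_range_reflect
        (fun j => ((2*K-2*a-2).choose (2*j+2) : ℚ) * GGz (2*b+1) (2*K-2*b-1) (2*j+2)) (K-1)]
      apply sum_congr rfl
      intro i hi
      rw [mem_range] at hi
      rw [show 2*(K-1-1-i)+2 = 2*K-2*i-2 by omega]
    rw [hrev, ← sum_sub_distrib]
    -- assemble into alternating sum over range (2K-1)
    have hF : ∑ i ∈ range (K-1),
          (((2*K-2*a-2).choose (2*i+1) : ℚ) * GGz (2*b+1) (2*K-2*b-1) (2*i+1)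
          - ((2*K-2*a-2).choose (2*i+2) : ℚ) * GGz (2*b+1) (2*K-2*b-1) (2*i+2))
        = (-1:ℚ)^(0:ℕ) * ((2*K-2*a-2).choose 0 : ℚ) * GGz (2*b+1) (2*K-2*b-1) 0
          - ∑ j ∈ range (2*K-1),
            (-1:ℚ)^j * ((2*K-2*a-2).choose j : ℚ) * GGz (2*b+1) (2*K-2*b-1) j := by
      rw [show 2*K-1 = 2*(K-1)+1 by omega, Finset.sum_range_succ']
      rw [sum_range_two_mul (K-1)
        (fun j => (-1:ℚ)^(j+1) * ((2*K-2*a-2).choose (j+1) : ℚ) * GGz (2*b+1) (2*K-2*b-1) (j+1))]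
      have hsgn : ∀ r ∈ range (K-1),
          ((-1:ℚ)^(2*r+1) * ((2*K-2*a-2).choose (2*r+1) : ℚ) * GGz (2*b+1) (2*K-2*b-1) (2*r+1)
            + (-1:ℚ)^(2*r+1+1) * ((2*K-2*a-2).choose (2*r+1+1) : ℚ)
              * GGz (2*b+1) (2*K-2*b-1) (2*r+1+1))
          = -((((2*K-2*a-2).choose (2*r+1) : ℚ)) * GGz (2*b+1) (2*K-2*b-1) (2*r+1)
              - (((2*K-2*a-2).choose (2*r+2) : ℚ)) * GGz (2*b+1) (2*K-2*b-1) (2*r+2)) := by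
        intro r _
        rw [Odd.neg_one_pow (⟨r, by ring⟩ : Odd (2*r+1)),
          Even.neg_one_pow (⟨r+1, by ring⟩ : Even (2*r+1+1)),
          show 2*r+1+1 = 2*r+2 by ring]
        ring
      rw [sum_congr rfl hsgn, Finset.sum_neg_distrib]
      ring
    rw [hF]
    have hG0 : GGz (2*b+1) (2*K-2*b-1) 0 = 0 := by
      rw [GGz_at_zero, bernoulli_odd_ge_three _ hm_odd hm3]; ring
    have hsub : ∑ j ∈ range (2*K-1),
          (-1:ℚ)^j * ((2*K-2*a-2).choose j : ℚ) * GGz (2*b+1) (2*K-2*b-1) j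
        = ∑ j ∈ range ((2*K-2*a-2)+1),
          (-1:ℚ)^j * ((2*K-2*a-2).choose j : ℚ) * GGz (2*b+1) (2*K-2*b-1) j := by
      rw [Finset.sum_subset (Finset.range_subset_range.mpr (by omega : (2*K-2*a-2)+1 ≤ 2*K-1))]
      intro j hj hnj
      rw [mem_range] at hj
      rw [mem_range, not_lt] at hnj
      rw [Nat.choose_eq_zero_of_lt (show 2*K-2*a-2 < j by omega)]
      push_cast; ring
    rw [hsub, alt_sum, Even.neg_one_pow (⟨K-a-1, by omega⟩ : Even (2*K-2*a-2)), hG0]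
    by_cases hab : a = b
    · subst hab
      rw [if_pos rfl, if_pos (by omega : 2*K-2*a-2 ≤ 2*K-2*a-1)]
      rw [show (2*K-2*a-1) - (2*K-2*a-2) = 1 by omega,
        show 1 + (2*a+1) - 1 = 2*a+1 by omega, Nat.choose_one_right, bernoulli_one]
      push_cast; ring
    · rw [if_neg hab]
      rcases Nat.lt_or_ge a b with hlt | hge
      · rw [if_neg (by omega)]
        ring
      · have hba : b < a := by omega
        rw [if_pos (by omega : 2*K-2*a-2 ≤ 2*K-2*b-1)]
        rw [bernoulli_odd_ge_three ((2*K-2*b-1) - (2*K-2*a-2))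
          ⟨a-b, by omega⟩ (by omega)]
        ring
  rw [hT]
  by_cases hab : a = b
  · rw [if_pos hab, if_pos hab]
    have hb0 : (2*(b:ℚ)+1) ≠ 0 := by positivity
    field_simp
  · rw [if_neg hab, if_neg hab, mul_zero]

/-- **Inverse of the Zagier matrix 𝒞, second expression.**
For odd `k = 2K+1 ≥ 5`, the matrix `D'` with entries
`D'_{r,s} = (2/(2s-1)) · ∑_{n=0}^{k-2s} C(2r-1, k-2s-n) · C(n+2s-2, n) · B_n`
is a two-sided inverse of the matrix `𝒞` with entries
`𝒞_{s,r} = C(2K-2s, 2r-1) + C(2K-2s, 2K-2r)` (indices `1 ≤ s, r ≤ K-1`). -/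
theorem zagier_matrix_inverse_second_expression (K : ℕ) (hK : 2 ≤ K)
    (C D' : Matrix (Fin (K - 1)) (Fin (K - 1)) ℚ)
    (hC : ∀ s r : Fin (K - 1),
      C s r = (Nat.choose (2 * K - 2 * (s.1 + 1)) (2 * (r.1 + 1) - 1) : ℚ)
        + (Nat.choose (2 * K - 2 * (s.1 + 1)) (2 * K - 2 * (r.1 + 1)) : ℚ))
    (hD' : ∀ r s : Fin (K - 1),
      D' r s = (2 / (2 * ((s.1 : ℚ) + 1) - 1)) *
        ∑ n ∈ Finset.range (2 * K + 1 - 2 * (s.1 + 1) + 1),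
          (Nat.choose (2 * (r.1 + 1) - 1) (2 * K + 1 - 2 * (s.1 + 1) - n) : ℚ)
            * (Nat.choose (n + 2 * (s.1 + 1) - 2) n : ℚ) * bernoulli n) :
    C * D' = 1 ∧ D' * C = 1 := by
  have key : C * D' = 1 := by
    ext s t
    rw [Matrix.mul_apply, Matrix.one_apply]
    have hs := s.2
    have ht := t.2
    have hterm : ∀ r : Fin (K-1), C s r * D' r t
        = (((2*K-2*s.1-2).choose (2*r.1+1) : ℚ) + ((2*K-2*s.1-2).choose (2*K-2*r.1-2) : ℚ))
          * ((2 / (2*(t.1:ℚ)+1)) * GGz (2*t.1+1) (2*K-2*t.1-1) (2*r.1+1)) := by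
      intro r
      have hr := r.2
      rw [hC s r, hD' r t]
      have e1 : 2*K - 2*(s.1+1) = 2*K-2*s.1-2 := by omega
      have e2 : 2*(r.1+1) - 1 = 2*r.1+1 := by omega
      have e3 : 2*K - 2*(r.1+1) = 2*K-2*r.1-2 := by omega
      have e4 : (2 : ℚ) * ((t.1:ℚ)+1) - 1 = 2*(t.1:ℚ)+1 := by ring
      rw [e1, e2, e3, e4]
      congr 2
      unfold GGz
      rw [show 2*K+1-2*(t.1+1)+1 = (2*K-2*t.1-1)+1 by omega]
      apply sum_congr rfl
      intro n _
      rw [show 2*K+1-2*(t.1+1)-n = 2*K-2*t.1-1-n by omega,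
        show n+2*(t.1+1)-2 = n+(2*t.1+1)-1 by omega]
    rw [Finset.sum_congr rfl (fun r _ => hterm r)]
    rw [Fin.sum_univ_eq_sum_range (fun i =>
      (((2*K-2*s.1-2).choose (2*i+1) : ℚ) + ((2*K-2*s.1-2).choose (2*K-2*i-2) : ℚ))
        * ((2 / (2*(t.1:ℚ)+1)) * GGz (2*t.1+1) (2*K-2*t.1-1) (2*i+1))) (K-1)]
    rw [entry_main K s.1 t.1 hK (by omega) (by omega)]
    simp [Fin.ext_iff]
  exact ⟨key, mul_eq_one_comm.mp key⟩
end

section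
/- Let k = 2K+1 ≥ 5 be an odd integer. Suppose that the parity theorem for double zeta values of weight k holds in the form: for every r with 1 ≤ r ≤ K-1 there exists a rational number q_r such that ζ(2r, k-2r) = ∑_{s=1}^{K-1} [C(2K-2s, 2r-1) + C(2K-2s, 2K-2r)] · ζ(2s)·ζ(k-2s) + q_r · ζ(k). Then for every s with 1 ≤ s ≤ K-1 there exists a rational number q such that ζ(2s)·ζ(k-2s) = ∑_{r=1}^{K-1} d_{r,s} · ζ(2r, k-2r) + q · ζ(k), where d_{r,s} = (2/(2s-1)) · ∑_{n=0}^{k-2s} C(2r-1, k-2s-n) · C(n+2s-2, n) · B_n. -/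
/-- The Riemann zeta value `ζ(c) = ∑_{n ≥ 1} 1/n^c` (as a sum of real numbers). -/
noncomputable def riemannZetaValue (c : ℕ) : ℝ :=
  ∑' n : ℕ, 1 / ((n : ℝ) + 1) ^ c

/-- The double zeta value `ζ(a,b) = ∑_{0 < m < n} 1/(m^a · n^b)`
(as an iterated sum of real numbers). -/
noncomputable def doubleZetaValue (a b : ℕ) : ℝ :=
  ∑' n : ℕ, (∑ m ∈ Finset.Ico 1 n, 1 / (m : ℝ) ^ a) / (n : ℝ) ^ b

section ZetaAux
open Finset
private def gq (b M L : ℕ) : ℚ :=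
  ∑ n ∈ range (M + 1),
    (Nat.choose (n + b) n : ℚ) * bernoulli n * (Nat.choose L (M - n) : ℚ)

private lemma gq_pascal (b M L : ℕ) :
    gq b (M + 1) (L + 1) = gq b (M + 1) L + gq b M L := by
  unfold gq
  have h : ∀ n ∈ range (M + 1),
      (Nat.choose (n + b) n : ℚ) * bernoulli n * (Nat.choose (L + 1) (M + 1 - n) : ℚ)
      = ((Nat.choose (n + b) n : ℚ) * bernoulli n * (Nat.choose L (M + 1 - n) : ℚ)
        + (Nat.choose (n + b) n : ℚ) * bernoulli n * (Nat.choose L (M - n) : ℚ)) := by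
    intro n hn
    simp only [mem_range] at hn
    have h1 : M + 1 - n = (M - n) + 1 := by omega
    rw [h1, Nat.choose_succ_succ' L (M - n)]
    push_cast
    ring
  rw [sum_range_succ, sum_range_succ
    (fun n => (Nat.choose (n + b) n : ℚ) * bernoulli n * (Nat.choose L (M + 1 - n) : ℚ)),
    Finset.sum_congr rfl h, Finset.sum_add_distrib]
  simp
  ring

private lemma gq_zero (b M : ℕ) :
    gq b M 0 = (Nat.choose (M + b) M : ℚ) * bernoulli M := by
  unfold gq
  rw [sum_range_succ]
  have h : ∀ n ∈ range M,
      (Nat.choose (n + b) n : ℚ) * bernoulli n * (Nat.choose 0 (M - n) : ℚ) = 0 := by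
    intro n hn
    simp only [mem_range] at hn
    have : Nat.choose 0 (M - n) = 0 := Nat.choose_eq_zero_of_lt (by omega)
    simp [this]
  rw [Finset.sum_eq_zero h]
  simp

private lemma gq_top (b M : ℕ) :
    gq b M (M + b) = (Nat.choose (M + b) M : ℚ) * (bernoulli M + if M = 1 then 1 else 0) := by
  unfold gq
  have key : ∀ n ∈ range (M + 1),
      (Nat.choose (n + b) n : ℚ) * bernoulli n * (Nat.choose (M + b) (M - n) : ℚ)
      = (Nat.choose (M + b) M : ℚ) * ((Nat.choose M n : ℚ) * bernoulli n) := by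
    intro n hn
    simp only [mem_range] at hn
    have hn' : n ≤ M := by omega
    have hnat : Nat.choose (n + b) n * Nat.choose (M + b) (M - n)
        = Nat.choose (M + b) M * Nat.choose M n := by
      have h1 := Nat.choose_mul (n := M + b) (k := n + b) (s := b)
        (by omega)
      -- h1 : (M+b).choose (n+b) * (n+b).choose b = (M+b).choose b * (M+b-b).choose (n+b-b)
      have e1 : M + b - b = M := by omega
      have e2 : n + b - b = n := by omega
      rw [e1, e2] at h1
      have s1 : Nat.choose (M + b) (n + b) = Nat.choose (M + b) (M - n) := by
        have := Nat.choose_symm (n := M + b) (k := n + b) (by omega)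
        rw [show M + b - (n + b) = M - n by omega] at this
        exact this.symm
      have s2 : Nat.choose (n + b) b = Nat.choose (n + b) n := by
        have := Nat.choose_symm (n := n + b) (k := n) (by omega)
        rw [show n + b - n = b by omega] at this
        exact this
      have s3 : Nat.choose (M + b) b = Nat.choose (M + b) M := by
        have := Nat.choose_symm (n := M + b) (k := M) (by omega)
        rw [show M + b - M = b by omega] at this
        exact this
      rw [s1, s2, s3] at h1
      rw [mul_comm]
      exact h1
    calc (Nat.choose (n + b) n : ℚ) * bernoulli n * (Nat.choose (M + b) (M - n) : ℚ)
        = ((Nat.choose (n + b) n * Nat.choose (M + b) (M - n) : ℕ) : ℚ) * bernoulli n := by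
          push_cast; ring
      _ = ((Nat.choose (M + b) M * Nat.choose M n : ℕ) : ℚ) * bernoulli n := by rw [hnat]
      _ = (Nat.choose (M + b) M : ℚ) * ((Nat.choose M n : ℚ) * bernoulli n) := by
          push_cast; ring
  rw [Finset.sum_congr rfl key, ← Finset.mul_sum]
  congr 1
  rw [sum_range_succ, sum_bernoulli]
  simp [add_comm]

private lemma gq_reflect (b : ℕ) : ∀ M L, L ≤ M + b →
    gq b M L = (-1 : ℚ) ^ M * gq b M (M + b - L) := by
  intro M
  induction M with
  | zero =>
    intro L hL
    unfold gq
    simp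
  | succ M ihM =>
    intro L
    induction L with
    | zero =>
      intro _
      rw [gq_zero, Nat.sub_zero, gq_top]
      rcases Nat.even_or_odd (M + 1) with he | ho
      · rw [he.neg_one_pow]
        have h1 : M + 1 ≠ 1 := by
          intro h
          rw [h] at he
          exact Nat.not_even_one he
        simp [h1, show M ≠ 0 by omega]
      · rw [ho.neg_one_pow]
        rcases eq_or_ne M 0 with rfl | h0
        · norm_num
        · have h1 : M + 1 ≠ 1 := by omega
          have hb : bernoulli (M + 1) = 0 := by
            rw [bernoulli_eq_bernoulli'_of_ne_one h1]
            exact bernoulli'_eq_zero_of_odd ho (by omega)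
          simp [hb, h1, h0]
    | succ L ihL =>
      intro hL1
      have hLM : L ≤ M + b := by omega
      have hL' : L ≤ M + 1 + b := by omega
      rw [gq_pascal, ihL hL', ihM L hLM]
      have e1 : M + 1 + b - L = (M + b - L) + 1 := by omega
      have e2 : M + 1 + b - (L + 1) = M + b - L := by omega
      rw [e1, e2, gq_pascal, pow_succ]
      ring

private lemma alt_choose_sum (n : ℕ) :
    ∑ i ∈ range (n + 1), (-1 : ℚ) ^ i * (Nat.choose n i : ℚ)
      = if n = 0 then 1 else 0 := by
  have h := Int.alternating_sum_range_choose (n := n)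
  have h2 : ((∑ i ∈ range (n + 1), (-1 : ℤ) ^ i * (Nat.choose n i : ℤ) : ℤ) : ℚ)
      = ((if n = 0 then 1 else 0 : ℤ) : ℚ) := by rw [h]
  push_cast at h2
  split_ifs at h2 ⊢ <;> simpa using h2

private lemma orth (m q T : ℕ) (hT : m < T) :
    ∑ j ∈ range T, (-1 : ℚ) ^ j * (Nat.choose m j : ℚ) * (Nat.choose j q : ℚ)
      = (-1 : ℚ) ^ m * (if q = m then 1 else 0) := by
  have hsub : range (m + 1) ⊆ range T := by
    intro x hx; simp only [mem_range] at *; omega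
  rw [← Finset.sum_subset hsub (by
    intro j hj hj'
    simp only [mem_range] at hj hj'
    have : Nat.choose m j = 0 := Nat.choose_eq_zero_of_lt (by omega)
    simp [this])]
  by_cases hq : q ≤ m
  · have hIco : Finset.Ico q (m + 1) ⊆ range (m + 1) := by
      intro x hx; simp only [mem_range, mem_Ico] at *; omega
    rw [← Finset.sum_subset hIco (by
      intro j hj hj'
      simp only [mem_range, mem_Ico] at hj hj'
      have : Nat.choose j q = 0 := Nat.choose_eq_zero_of_lt (by omega)
      simp [this])]
    rw [Finset.sum_Ico_eq_sum_range]
    have key : ∀ i ∈ range (m + 1 - q),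
        (-1 : ℚ) ^ (q + i) * (Nat.choose m (q + i) : ℚ) * (Nat.choose (q + i) q : ℚ)
        = ((-1 : ℚ) ^ q * (Nat.choose m q : ℚ))
            * ((-1 : ℚ) ^ i * (Nat.choose (m - q) i : ℚ)) := by
      intro i hi
      simp only [mem_range] at hi
      have hnat : Nat.choose m (q + i) * Nat.choose (q + i) q
          = Nat.choose m q * Nat.choose (m - q) i := by
        have h1 := Nat.choose_mul (n := m) (k := q + i) (s := q) (by omega)
        rw [show q + i - q = i by omega] at h1
        exact h1
      calc (-1 : ℚ) ^ (q + i) * (Nat.choose m (q + i) : ℚ) * (Nat.choose (q + i) q : ℚ)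
          = (-1 : ℚ) ^ (q + i) * ((Nat.choose m (q + i) * Nat.choose (q + i) q : ℕ) : ℚ) := by
            push_cast; ring
        _ = (-1 : ℚ) ^ (q + i) * ((Nat.choose m q * Nat.choose (m - q) i : ℕ) : ℚ) := by
            rw [hnat]
        _ = ((-1 : ℚ) ^ q * (Nat.choose m q : ℚ))
            * ((-1 : ℚ) ^ i * (Nat.choose (m - q) i : ℚ)) := by
            rw [pow_add]; push_cast; ring
    rw [Finset.sum_congr rfl key, ← Finset.mul_sum,
      show m + 1 - q = (m - q) + 1 by omega, alt_choose_sum]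
    by_cases hqm : q = m
    · subst hqm; simp
    · have : m - q ≠ 0 := by omega
      simp [this, hqm]
  · have : ∀ j ∈ range (m + 1),
        (-1 : ℚ) ^ j * (Nat.choose m j : ℚ) * (Nat.choose j q : ℚ) = 0 := by
      intro j hj
      simp only [mem_range] at hj
      have : Nat.choose j q = 0 := Nat.choose_eq_zero_of_lt (by omega)
      simp [this]
    rw [Finset.sum_eq_zero this]
    have : q ≠ m := by omega
    simp [this]

private lemma alt_gq_sum (b N m T : ℕ) (hT : m < T) :
    ∑ j ∈ range T, (-1 : ℚ) ^ j * (Nat.choose m j : ℚ) * gq b N j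
      = (-1 : ℚ) ^ m * (if m ≤ N then
          (Nat.choose (N - m + b) (N - m) : ℚ) * bernoulli (N - m) else 0) := by
  unfold gq
  have step1 : ∀ j ∈ range T,
      (-1 : ℚ) ^ j * (Nat.choose m j : ℚ)
        * ∑ n ∈ range (N + 1),
            (Nat.choose (n + b) n : ℚ) * bernoulli n * (Nat.choose j (N - n) : ℚ)
      = ∑ n ∈ range (N + 1),
          (Nat.choose (n + b) n : ℚ) * bernoulli n
            * ((-1 : ℚ) ^ j * (Nat.choose m j : ℚ) * (Nat.choose j (N - n) : ℚ)) := by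
    intro j _
    rw [Finset.mul_sum]
    exact Finset.sum_congr rfl fun n _ => by ring
  rw [Finset.sum_congr rfl step1, Finset.sum_comm]
  have step2 : ∀ n ∈ range (N + 1),
      ∑ j ∈ range T,
          (Nat.choose (n + b) n : ℚ) * bernoulli n
            * ((-1 : ℚ) ^ j * (Nat.choose m j : ℚ) * (Nat.choose j (N - n) : ℚ))
      = (Nat.choose (n + b) n : ℚ) * bernoulli n
          * ((-1 : ℚ) ^ m * (if N - n = m then 1 else 0)) := by
    intro n _
    rw [← Finset.mul_sum, orth m (N - n) T hT]
  rw [Finset.sum_congr rfl step2]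
  by_cases hm : m ≤ N
  · rw [Finset.sum_eq_single (N - m)]
    · rw [show N - (N - m) = m by omega, if_pos rfl, if_pos hm]
      ring
    · intro n hn hne
      simp only [mem_range] at hn
      have : N - n ≠ m := by omega
      simp [this]
    · intro h
      exact absurd (mem_range.mpr (by omega)) h
  · rw [Finset.sum_eq_zero, if_neg hm, mul_zero]
    intro n hn
    simp only [mem_range] at hn
    have : N - n ≠ m := by omega
    simp [this]

private lemma sum_range_even_odd (n : ℕ) (f : ℕ → ℚ) :
    ∑ j ∈ range (2 * n), f j = ∑ i ∈ range n, (f (2 * i) + f (2 * i + 1)) := by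
  induction n with
  | zero => simp
  | succ n ih =>
    rw [show 2 * (n + 1) = (2 * n + 1) + 1 by ring, sum_range_succ, sum_range_succ,
      ih, sum_range_succ]
    rw [add_assoc]

private lemma bernoulli_odd_zero {n : ℕ} (ho : Odd n) (hn : 3 ≤ n) : bernoulli n = 0 := by
  rw [bernoulli_eq_bernoulli'_of_ne_one (by omega)]
  exact bernoulli'_eq_zero_of_odd ho (by omega)

private lemma main_id (K s t : ℕ) (hK : 2 ≤ K) (hs1 : 1 ≤ s) (hs2 : s ≤ K - 1)
    (ht1 : 1 ≤ t) (ht2 : t ≤ K - 1) :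
    ∑ r ∈ Icc 1 (K - 1),
        ((Nat.choose (2 * K - 2 * t) (2 * r - 1)
            + Nat.choose (2 * K - 2 * t) (2 * K - 2 * r) : ℕ) : ℚ)
          * gq (2 * s - 2) (2 * K + 1 - 2 * s) (2 * r - 1)
      = if s = t then (2 * (s : ℚ) - 1) / 2 else 0 := by
  set b := 2 * s - 2 with hb
  set N := 2 * K + 1 - 2 * s with hN
  set m := 2 * K - 2 * t with hm
  have hNb : N + b = 2 * K - 1 := by omega
  have hN3 : 3 ≤ N := by omega
  have hNodd : Odd N := ⟨K - s, by omega⟩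
  have hbernN : bernoulli N = 0 := bernoulli_odd_zero hNodd hN3
  set F : ℕ → ℚ := fun j => (Nat.choose m j : ℚ) * gq b N j with hF
  -- Step 1: rewrite each summand
  have step1 : ∀ r ∈ Icc 1 (K - 1),
      ((Nat.choose m (2 * r - 1) + Nat.choose m (2 * K - 2 * r) : ℕ) : ℚ)
          * gq b N (2 * r - 1)
        = F (2 * r - 1) - F (2 * K - 2 * r) := by
    intro r hr
    simp only [mem_Icc] at hr
    have hr1 : 2 * r - 1 ≤ N + b := by omega
    have hrefl := gq_reflect b N (2 * r - 1) hr1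
    rw [hNodd.neg_one_pow, show N + b - (2 * r - 1) = 2 * K - 2 * r by omega] at hrefl
    rw [hF]
    simp only []
    push_cast
    rw [hrefl]
    ring
  rw [Finset.sum_congr rfl step1]
  have hIcc : Icc 1 (K - 1) = Ico 1 K := by
    rw [← Finset.Ico_add_one_right_eq_Icc]
    congr 1
    omega
  -- Step 2: odd-index sum
  have godd : ∑ r ∈ Icc 1 (K - 1), F (2 * r - 1) = ∑ i ∈ range K, F (2 * i + 1) := by
    rw [hIcc, Finset.sum_Ico_eq_sum_range,
      show K = (K - 1) + 1 by omega, sum_range_succ,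
      show (K - 1) + 1 - 1 = K - 1 by omega]
    have hlast : F (2 * (K - 1) + 1) = 0 := by
      have : Nat.choose m (2 * (K - 1) + 1) = 0 :=
        Nat.choose_eq_zero_of_lt (by omega)
      simp [hF, this]
    rw [hlast, add_zero]
    exact Finset.sum_congr rfl fun i hi => by
      simp only [mem_range] at hi
      congr 1
      omega
  -- Step 3: even-index sum
  have geven : ∑ r ∈ Icc 1 (K - 1), F (2 * K - 2 * r) = ∑ i ∈ range K, F (2 * i) := by
    have h0 : F 0 = 0 := by
      have : gq b N 0 = 0 := by rw [gq_zero, hbernN, mul_zero]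
      simp [hF, this]
    have rhs : ∑ i ∈ range K, F (2 * i)
        = ∑ i ∈ range (K - 1), F (2 * (i + 1)) + F (2 * 0) := by
      rw [show K = (K - 1) + 1 by omega, Finset.sum_range_succ',
        show K - 1 + 1 - 1 = K - 1 by omega]
    rw [rhs, show (2 * 0 : ℕ) = 0 by ring, h0, add_zero]
    rw [hIcc, Finset.sum_Ico_eq_sum_range]
    rw [← Finset.sum_range_reflect (fun i => F (2 * (i + 1))) (K - 1)]
    exact Finset.sum_congr rfl fun i hi => by
      simp only [mem_range] at hi
      congr 1
      omega
  rw [Finset.sum_sub_distrib, godd, geven]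
  -- Step 4: assemble to alternating sum
  have step4 : ∑ i ∈ range K, F (2 * i + 1) - ∑ i ∈ range K, F (2 * i)
      = -∑ j ∈ range (2 * K), (-1 : ℚ) ^ j * (Nat.choose m j : ℚ) * gq b N j := by
    rw [sum_range_even_odd K (fun j => (-1 : ℚ) ^ j * (Nat.choose m j : ℚ) * gq b N j)]
    rw [← Finset.sum_sub_distrib, ← Finset.sum_neg_distrib]
    refine Finset.sum_congr rfl fun i _ => ?_
    have he : (-1 : ℚ) ^ (2 * i) = 1 := Even.neg_one_pow ⟨i, by ring⟩
    have ho : (-1 : ℚ) ^ (2 * i + 1) = -1 := Odd.neg_one_pow ⟨i, by ring⟩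
    rw [he, ho, hF]
    ring
  rw [step4, alt_gq_sum b N m (2 * K) (by omega)]
  have hmeven : (-1 : ℚ) ^ m = 1 := Even.neg_one_pow ⟨K - t, by omega⟩
  rw [hmeven, one_mul]
  by_cases hst : s = t
  · subst hst
    have hmN : m ≤ N := by omega
    rw [if_pos hmN, if_pos rfl, show N - m = 1 by omega, bernoulli_one,
      show 1 + b = 2 * s - 1 by omega, Nat.choose_one_right]
    have : ((2 * s - 1 : ℕ) : ℚ) = 2 * (s : ℚ) - 1 := by
      push_cast [Nat.cast_sub (by omega : 1 ≤ 2 * s)]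
      ring
    rw [this]
    ring
  · rw [if_neg hst]
    rcases Nat.lt_or_ge t s with hlt | hge
    · -- s > t : m > N
      rw [if_neg (by omega)]
      ring
    · -- s < t (since s ≠ t) : N - m odd ≥ 3
      have hlt : s < t := by omega
      have hmN : m ≤ N := by omega
      rw [if_pos hmN]
      have : bernoulli (N - m) = 0 :=
        bernoulli_odd_zero ⟨t - s, by omega⟩ (by omega)
      rw [this]
      ring

end ZetaAux

/-- **Expressing products of zeta values by double zeta values of odd weight.**
Let `k = 2K+1 ≥ 5` be odd.  If the parity theorem holds, i.e. for every `1 ≤ r ≤ K-1`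
there is `q_r ∈ ℚ` with
`ζ(2r, k-2r) = ∑_{s=1}^{K-1} [C(2K-2s,2r-1) + C(2K-2s,2K-2r)]·ζ(2s)ζ(k-2s) + q_r·ζ(k)`,
then for every `1 ≤ s ≤ K-1` there is `q ∈ ℚ` with
`ζ(2s)ζ(k-2s) = ∑_{r=1}^{K-1} d_{r,s}·ζ(2r, k-2r) + q·ζ(k)`, where
`d_{r,s} = (2/(2s-1)) · ∑_{n=0}^{k-2s} C(2r-1, k-2s-n)·C(n+2s-2, n)·B_n`. -/
theorem zeta_product_in_terms_of_double_zeta (K : ℕ) (hK : 2 ≤ K)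
    (hyp : ∀ r : ℕ, 1 ≤ r → r ≤ K - 1 → ∃ q : ℚ,
      doubleZetaValue (2 * r) (2 * K + 1 - 2 * r) =
        (∑ s ∈ Finset.Icc 1 (K - 1),
          ((Nat.choose (2 * K - 2 * s) (2 * r - 1)
              + Nat.choose (2 * K - 2 * s) (2 * K - 2 * r) : ℕ) : ℝ)
            * (riemannZetaValue (2 * s) * riemannZetaValue (2 * K + 1 - 2 * s)))
        + (q : ℝ) * riemannZetaValue (2 * K + 1)) :
    ∀ s : ℕ, 1 ≤ s → s ≤ K - 1 → ∃ q : ℚ,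
      riemannZetaValue (2 * s) * riemannZetaValue (2 * K + 1 - 2 * s) =
        (∑ r ∈ Finset.Icc 1 (K - 1),
          (((2 / (2 * (s : ℚ) - 1)) * ∑ n ∈ Finset.range (2 * K + 1 - 2 * s + 1),
            (Nat.choose (2 * r - 1) (2 * K + 1 - 2 * s - n) : ℚ)
              * (Nat.choose (n + 2 * s - 2) n : ℚ) * bernoulli n : ℚ) : ℝ)
            * doubleZetaValue (2 * r) (2 * K + 1 - 2 * r))
        + (q : ℝ) * riemannZetaValue (2 * K + 1) := by
  intro s hs1 hs2
  classical
  set Z : ℝ := riemannZetaValue (2 * K + 1) with hZ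
  set P : ℕ → ℝ :=
    fun t => riemannZetaValue (2 * t) * riemannZetaValue (2 * K + 1 - 2 * t) with hP
  set DZ : ℕ → ℝ := fun r => doubleZetaValue (2 * r) (2 * K + 1 - 2 * r) with hDZ
  set c : ℕ → ℕ → ℕ := fun t r =>
    Nat.choose (2 * K - 2 * t) (2 * r - 1) + Nat.choose (2 * K - 2 * t) (2 * K - 2 * r)
    with hc
  set d : ℕ → ℚ :=
    fun r => (2 / (2 * (s : ℚ) - 1)) * gq (2 * s - 2) (2 * K + 1 - 2 * s) (2 * r - 1)
    with hd
  set qr : ℕ → ℚ := fun r =>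
    if h : 1 ≤ r ∧ r ≤ K - 1 then (hyp r h.1 h.2).choose else 0 with hqr
  have hqr_spec : ∀ r, 1 ≤ r → r ≤ K - 1 →
      DZ r = (∑ t ∈ Finset.Icc 1 (K - 1), ((c t r : ℕ) : ℝ) * P t) + (qr r : ℝ) * Z := by
    intro r h1 h2
    have := (hyp r h1 h2).choose_spec
    rw [hqr]
    simp only [dif_pos (⟨h1, h2⟩ : 1 ≤ r ∧ r ≤ K - 1)]
    exact this
  have h2s : (2 * (s : ℚ) - 1) ≠ 0 := by
    have : (1 : ℚ) ≤ (s : ℚ) := by exact_mod_cast hs1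
    intro h
    linarith
  -- bridge: statement coefficient = d r
  have bridge : ∀ r : ℕ,
      ((2 / (2 * (s : ℚ) - 1)) * ∑ n ∈ Finset.range (2 * K + 1 - 2 * s + 1),
        (Nat.choose (2 * r - 1) (2 * K + 1 - 2 * s - n) : ℚ)
          * (Nat.choose (n + 2 * s - 2) n : ℚ) * bernoulli n) = d r := by
    intro r
    rw [hd]
    congr 1
    unfold gq
    refine Finset.sum_congr rfl fun n hn => ?_
    rw [show n + 2 * s - 2 = n + (2 * s - 2) by omega]
    ring
  -- key matrix identity
  have key : ∀ t ∈ Finset.Icc 1 (K - 1),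
      (∑ r ∈ Finset.Icc 1 (K - 1), d r * ((c t r : ℕ) : ℚ))
        = if s = t then 1 else 0 := by
    intro t ht
    simp only [Finset.mem_Icc] at ht
    have hmain := main_id K s t hK hs1 hs2 ht.1 ht.2
    have : ∑ r ∈ Finset.Icc 1 (K - 1), d r * ((c t r : ℕ) : ℚ)
        = (2 / (2 * (s : ℚ) - 1)) * ∑ r ∈ Finset.Icc 1 (K - 1),
            ((c t r : ℕ) : ℚ) * gq (2 * s - 2) (2 * K + 1 - 2 * s) (2 * r - 1) := by
      rw [Finset.mul_sum]
      exact Finset.sum_congr rfl fun r _ => by rw [hd]; ring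
    rw [this, hmain]
    split_ifs
    · field_simp
    · ring
  refine ⟨-∑ r ∈ Finset.Icc 1 (K - 1), d r * qr r, ?_⟩
  have stepA : ∑ r ∈ Finset.Icc 1 (K - 1),
      (((2 / (2 * (s : ℚ) - 1)) * ∑ n ∈ Finset.range (2 * K + 1 - 2 * s + 1),
        (Nat.choose (2 * r - 1) (2 * K + 1 - 2 * s - n) : ℚ)
          * (Nat.choose (n + 2 * s - 2) n : ℚ) * bernoulli n : ℚ) : ℝ) * DZ r
      = ∑ r ∈ Finset.Icc 1 (K - 1), ((d r : ℚ) : ℝ) * DZ r := by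
    refine Finset.sum_congr rfl fun r _ => ?_
    rw [bridge r]
  have stepB : ∑ r ∈ Finset.Icc 1 (K - 1), ((d r : ℚ) : ℝ) * DZ r
      = P s + ((∑ r ∈ Finset.Icc 1 (K - 1), d r * qr r : ℚ) : ℝ) * Z := by
    have expand : ∀ r ∈ Finset.Icc 1 (K - 1),
        ((d r : ℚ) : ℝ) * DZ r
          = (∑ t ∈ Finset.Icc 1 (K - 1), ((d r : ℚ) : ℝ) * (((c t r : ℕ) : ℝ) * P t))
            + ((d r * qr r : ℚ) : ℝ) * Z := by
      intro r hr
      simp only [Finset.mem_Icc] at hr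
      rw [hqr_spec r hr.1 hr.2, mul_add, Finset.mul_sum]
      congr 1
      push_cast
      ring
    rw [Finset.sum_congr rfl expand, Finset.sum_add_distrib, Finset.sum_comm]
    have inner : ∀ t ∈ Finset.Icc 1 (K - 1),
        ∑ r ∈ Finset.Icc 1 (K - 1), ((d r : ℚ) : ℝ) * (((c t r : ℕ) : ℝ) * P t)
          = (if s = t then (1 : ℝ) else 0) * P t := by
      intro t ht
      have reassoc : ∀ r ∈ Finset.Icc 1 (K - 1),
          ((d r : ℚ) : ℝ) * (((c t r : ℕ) : ℝ) * P t)
            = (((d r : ℚ) : ℝ) * ((c t r : ℕ) : ℝ)) * P t := fun r _ => by ring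
      rw [Finset.sum_congr rfl reassoc, ← Finset.sum_mul]
      congr 1
      have := key t ht
      have cast : ((∑ r ∈ Finset.Icc 1 (K - 1), d r * ((c t r : ℕ) : ℚ) : ℚ) : ℝ)
          = ∑ r ∈ Finset.Icc 1 (K - 1), ((d r : ℚ) : ℝ) * ((c t r : ℕ) : ℝ) := by
        push_cast
        rfl
      rw [← cast, this]
      split_ifs <;> norm_num
    rw [Finset.sum_congr rfl inner]
    have hsmem : s ∈ Finset.Icc 1 (K - 1) := Finset.mem_Icc.mpr ⟨hs1, hs2⟩
    rw [Finset.sum_eq_single_of_mem s hsmem (fun t _ hts => by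
      rw [if_neg (Ne.symm hts), zero_mul]), if_pos rfl, one_mul]
    congr 1
    push_cast
    rw [Finset.sum_mul]
  rw [stepA, stepB]
  push_cast
  ring
end

section
/- Let k = 2K+1 ≥ 5 be an odd integer and let i be an integer with 0 ≤ i ≤ k-2. Then for all real numbers x and y, F_k^{(i)}(x+y, x) + F_k^{(i)}(x+y, y) = R_k^{(i)}(x, y). -/
/-- `F_k^{(i)}(x,y)` for `k = 2K+1`:
`∑_{s=1}^{K-1} ((-2/(2s-1)) · ∑_{n=0}^{k-2s} C(i,k-2s-n)·C(n+2s-2,n)·B_n) · x^{2K-2s} y^{2s-1}`. -/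
noncomputable def Fpoly (K i : ℕ) (x y : ℝ) : ℝ :=
  ∑ s ∈ Finset.Icc 1 (K - 1),
    (((-2 / (2 * (s : ℚ) - 1)) * ∑ n ∈ Finset.range (2 * K + 1 - 2 * s + 1),
        (Nat.choose i (2 * K + 1 - 2 * s - n) : ℚ)
          * (Nat.choose (n + 2 * s - 2) n : ℚ) * bernoulli n : ℚ) : ℝ)
      * x ^ (2 * K - 2 * s) * y ^ (2 * s - 1)

/-- `R_k^{(i)}(x,y) = -((k-2-2i)/(k-2))x^{k-2} + (-1)^i x^{k-2-i} y^i
+ (-1)^i x^i y^{k-2-i} - ((k-2-2i)/(k-2))y^{k-2}`. -/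
noncomputable def Rpoly (k i : ℕ) (x y : ℝ) : ℝ :=
  -(((k : ℝ) - 2 - 2 * (i : ℝ)) / ((k : ℝ) - 2)) * x ^ (k - 2)
    + (-1) ^ i * x ^ (k - 2 - i) * y ^ i
    + (-1) ^ i * x ^ i * y ^ (k - 2 - i)
    - (((k : ℝ) - 2 - 2 * (i : ℝ)) / ((k : ℝ) - 2)) * y ^ (k - 2)

section FpolyAux
open Finset Polynomial

lemma FbernPolyReflect (n : ℕ) :
    (Polynomial.bernoulli n).comp (1 - X) = (-1 : ℚ) ^ n • Polynomial.bernoulli n := by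
  induction n with
  | zero => simp
  | succ m ih =>
    set f : ℚ[X] := (Polynomial.bernoulli (m+1)).comp (1 - X)
      - (-1 : ℚ) ^ (m+1) • Polynomial.bernoulli (m+1) with hf
    have hd : derivative f = 0 := by
      rw [hf, derivative_sub, derivative_comp_one_sub_X, derivative_smul,
        Polynomial.derivative_bernoulli_add_one, mul_comp, add_comp, natCast_comp, one_comp, ih]
      simp only [smul_eq_C_mul, pow_succ, C_neg, C_pow, C_1, C_mul]
      ring
    have hC := Polynomial.eq_C_of_derivative_eq_zero hd
    have h0 : f.coeff 0 = 0 := by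
      rw [Polynomial.coeff_zero_eq_eval_zero, hf]
      simp only [eval_sub, eval_comp, eval_sub, eval_one, eval_X, sub_zero, eval_smul,
        Polynomial.bernoulli_eval_one, Polynomial.bernoulli_eval_zero, smul_eq_mul]
      rw [bernoulli'_eq_bernoulli]
      ring
    have hz : f = 0 := by rw [hC, h0, map_zero]
    exact sub_eq_zero.mp (hf ▸ hz)

lemma FbernAevalSum (M : ℕ) (t : ℝ) :
    (Polynomial.aeval t) (Polynomial.bernoulli M)
      = ∑ n ∈ range (M+1), (M.choose n : ℝ) * ((bernoulli n : ℚ) : ℝ) * t ^ (M-n) := by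
  simp only [Polynomial.bernoulli, map_sum, aeval_monomial]
  refine Finset.sum_congr rfl fun n _ => ?_
  rw [eq_ratCast (algebraMap ℚ ℝ)]
  push_cast
  ring

lemma FbernAevalReflect (M : ℕ) (t : ℝ) :
    (Polynomial.aeval (1 - t)) (Polynomial.bernoulli M)
      = (-1 : ℝ) ^ M * (Polynomial.aeval t) (Polynomial.bernoulli M) := by
  have h := FbernPolyReflect M
  have h2 := congrArg (Polynomial.aeval (R := ℚ) (A := ℝ) t) h
  rw [Polynomial.aeval_comp] at h2
  simp only [map_sub, map_one, aeval_X, map_smul] at h2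
  rw [h2, Rat.smul_def]
  push_cast
  ring

lemma FkeySum (M : ℕ) (hM : Odd M) (x y : ℝ) :
    ∑ n ∈ range (M+1),
      (M.choose n : ℝ) * ((bernoulli n : ℚ) : ℝ) * (x+y)^n * (x^(M-n) + y^(M-n)) = 0 := by
  rcases eq_or_ne (x + y) 0 with hz | hz
  · have hy : y = -x := by linarith [hz]
    rw [Finset.sum_eq_single 0]
    · simp [hy, hM.neg_pow]
    · intro n hn h0
      rw [hz, zero_pow h0]
      ring
    · simp
  · have hxz : ∀ n ∈ range (M+1), (M.choose n : ℝ) * ((bernoulli n : ℚ) : ℝ) * (x+y)^n * (x^(M-n) + y^(M-n))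
        = (x+y)^M * ((M.choose n : ℝ) * ((bernoulli n : ℚ) : ℝ) * (x/(x+y))^(M-n))
          + (x+y)^M * ((M.choose n : ℝ) * ((bernoulli n : ℚ) : ℝ) * (y/(x+y))^(M-n)) := by
      intro n hn
      have hn' : n ≤ M := Nat.lt_succ_iff.mp (Finset.mem_range.mp hn)
      have hsplit : (x+y)^M = (x+y)^n * (x+y)^(M-n) := by
        rw [← pow_add]; congr 1; omega
      rw [hsplit]
      rw [div_pow, div_pow]
      field_simp
    rw [Finset.sum_congr rfl hxz, Finset.sum_add_distrib, ← Finset.mul_sum, ← Finset.mul_sum]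
    have e1 : ∑ n ∈ range (M+1), (M.choose n : ℝ) * ((bernoulli n : ℚ) : ℝ) * (x/(x+y))^(M-n)
        = (Polynomial.aeval (x/(x+y))) (Polynomial.bernoulli M) := by
      rw [FbernAevalSum]
    have e2 : ∑ n ∈ range (M+1), (M.choose n : ℝ) * ((bernoulli n : ℚ) : ℝ) * (y/(x+y))^(M-n)
        = (Polynomial.aeval (1 - x/(x+y))) (Polynomial.bernoulli M) := by
      rw [FbernAevalSum]
      congr 2
      field_simp
      simp only [add_sub_cancel_left]
    rw [e1, e2, FbernAevalReflect, hM.neg_one_pow]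
    ring

lemma FbernoulliOddZero {n : ℕ} (hn : Odd n) (h1 : n ≠ 1) : _root_.bernoulli n = 0 := by
  rw [bernoulli_eq_bernoulli'_of_ne_one h1]
  refine bernoulli'_eq_zero_of_odd hn ?_
  rcases hn with ⟨m, hm⟩; omega

lemma FevenPart (M : ℕ) (hM : Odd M) (x y : ℝ) :
    ∑ u ∈ range (M/2 + 1),
      (M.choose (2*u) : ℝ) * ((bernoulli (2*u) : ℚ) : ℝ) * (x+y)^(2*u) * (x^(M-2*u) + y^(M-2*u))
      = (M : ℝ)/2 * ((x+y) * (x^(M-1) + y^(M-1))) := by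
  set f : ℕ → ℝ := fun n =>
    (M.choose n : ℝ) * ((bernoulli n : ℚ) : ℝ) * (x+y)^n * (x^(M-n) + y^(M-n)) with hfdef
  have hsplit := Finset.sum_filter_add_sum_filter_not (range (M+1)) (fun n => Even n) f
  have hM1 : 1 ≤ M := hM.pos
  have heven : ∑ n ∈ (range (M+1)).filter (fun n => Even n), f n
      = ∑ u ∈ range (M/2 + 1), f (2*u) := by
    refine Finset.sum_nbij' (fun n => n / 2) (fun u => 2 * u) ?_ ?_ ?_ ?_ ?_
    · intro a ha
      simp only [mem_filter, mem_range] at ha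
      rcases ha.2 with ⟨c, hc⟩
      simp only [mem_range]
      omega
    · intro u hu
      simp only [mem_range] at hu
      simp only [mem_filter, mem_range]
      exact ⟨by omega, ⟨u, by omega⟩⟩
    · intro a ha
      simp only [mem_filter, mem_range] at ha
      rcases ha.2 with ⟨c, hc⟩
      omega
    · intro u hu; omega
    · intro a ha
      simp only [mem_filter, mem_range] at ha
      rcases ha.2 with ⟨c, hc⟩
      have h2 : 2 * (a / 2) = a := by omega
      rw [h2]
  have hodd : ∑ n ∈ (range (M+1)).filter (fun n => ¬ Even n), f n = f 1 := by
    refine Finset.sum_eq_single_of_mem 1 ?_ ?_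
    · simp only [mem_filter, mem_range]
      exact ⟨by omega, by simp⟩
    · intro n hn hn1
      simp only [mem_filter, mem_range] at hn
      have hz : _root_.bernoulli n = 0 := FbernoulliOddZero (Nat.not_even_iff_odd.mp hn.2) hn1
      simp [hfdef, hz]
  have hf1 : f 1 = -((M:ℝ)/2) * ((x+y) * (x^(M-1) + y^(M-1))) := by
    simp only [hfdef, _root_.bernoulli_one, Nat.choose_one_right, pow_one]
    push_cast
    ring
  have hkey := FkeySum M hM x y
  have : ∑ u ∈ range (M/2 + 1), f (2*u) = - f 1 := by
    have : ∑ n ∈ (range (M+1)).filter (fun n => Even n), f n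
        + ∑ n ∈ (range (M+1)).filter (fun n => ¬ Even n), f n = 0 := by
      rw [hsplit]; exact hkey
    rw [heven, hodd] at this
    linarith
  rw [show (∑ u ∈ range (M/2 + 1),
      (M.choose (2*u) : ℝ) * ((bernoulli (2*u) : ℚ) : ℝ) * (x+y)^(2*u) * (x^(M-2*u) + y^(M-2*u)))
      = ∑ u ∈ range (M/2 + 1), f (2*u) from rfl, this, hf1]
  ring

noncomputable def FW (K : ℕ) (x y : ℝ) (j s : ℕ) : ℝ :=
  (-2 / (2*(s:ℝ) - 1)) * ((2*K-1-j).choose (2*K+1-2*s-j) : ℝ)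
    * ((_root_.bernoulli (2*K+1-2*s-j) : ℚ) : ℝ) * (x+y)^(2*K-2*s) * (x^(2*s-1) + y^(2*s-1))

lemma FcoreSum (K t : ℕ) (hK : 2 ≤ K) (ht : t ≤ K-1) (x y : ℝ) :
    ∑ s ∈ Icc 1 (K-t), FW K x y (2*t+1) s
      = -((x+y)^(2*t+1) * (x^(2*K-2*t-2) + y^(2*K-2*t-2))) := by
  set M : ℕ := 2*K-2*t-1 with hM
  have hModd : Odd M := by refine ⟨K-t-1, by omega⟩
  have hM1 : 1 ≤ M := by omega
  have hMr : (M:ℝ) = 2*(K:ℝ) - 2*(t:ℝ) - 1 := by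
    have h := congrArg (fun n : ℕ => (n : ℝ)) (show M + (2*t+1) = 2*K by omega)
    push_cast at h
    linarith
  -- reindex s = (K-t) - u
  have hre : ∑ s ∈ Icc 1 (K-t), FW K x y (2*t+1) s
      = ∑ u ∈ range (K-t), FW K x y (2*t+1) (K-t-u) := by
    refine Finset.sum_nbij' (fun s => K-t-s) (fun u => K-t-u) ?_ ?_ ?_ ?_ ?_
    · intro s hs; simp only [mem_Icc] at hs; simp only [mem_range]; omega
    · intro u hu; simp only [mem_range] at hu; simp only [mem_Icc]; omega
    · intro s hs; simp only [mem_Icc] at hs; omega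
    · intro u hu; simp only [mem_range] at hu; omega
    · intro s hs; simp only [mem_Icc] at hs
      congr 1; omega
  rw [hre]
  have hterm : ∀ u ∈ range (K-t), FW K x y (2*t+1) (K-t-u)
      = (-2/(M:ℝ)) * (x+y)^(2*t) *
        ((M.choose (2*u) : ℝ) * ((_root_.bernoulli (2*u) : ℚ) : ℝ) * (x+y)^(2*u)
          * (x^(M-2*u) + y^(M-2*u))) := by
    intro u hu
    simp only [mem_range] at hu
    have hs1 : 2*K+1-2*(K-t-u)-(2*t+1) = 2*u := by omega
    have hs2 : 2*K-1-(2*t+1) = M - 1 := by omega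
    have hs3 : 2*(K-t-u) - 1 = M - 2*u := by omega
    have hs4 : 2*K - 2*(K-t-u) = 2*t + 2*u := by omega
    rw [FW, hs1, hs2, hs3, hs4]
    have hcast : ((K-t-u : ℕ) : ℝ) = (K:ℝ) - t - u := by
      push_cast [Nat.cast_sub (by omega : u ≤ K - t), Nat.cast_sub (by omega : t ≤ K)]
      ring
    rw [hcast]
    have hchoose : (M:ℕ) * (M-1).choose (2*u) = (M - 2*u) * M.choose (2*u) := by
      have h1 : M * (M-1).choose (2*u) = (M-1).succ.choose (2*u+1) * (2*u+1) := by
        rw [Nat.succ_eq_add_one, ← Nat.add_one_mul_choose_eq]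
        congr 1
        omega
      have h2 : (M-1).succ = M := by omega
      rw [h1, h2, Nat.choose_succ_right_eq]
      ring
    have hMne : (M:ℝ) ≠ 0 := by positivity
    have hM2u : ((M:ℕ) - 2*u : ℕ) ≠ 0 := by omega
    have hcoef : -2 / (2*((K:ℝ) - t - u) - 1) * ((M-1).choose (2*u) : ℝ)
        = -2/(M:ℝ) * (M.choose (2*u) : ℝ) := by
      have hden : 2*((K:ℝ) - t - u) - 1 = ((M - 2*u : ℕ) : ℝ) := by
        push_cast [Nat.cast_sub (by omega : 2*u ≤ M)]
        linarith [hMr]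
      rw [hden]
      have hcastc := congrArg (fun n : ℕ => (n : ℝ)) hchoose
      push_cast at hcastc
      have hne2 : ((M - 2*u : ℕ) : ℝ) ≠ 0 := Nat.cast_ne_zero.mpr hM2u
      field_simp
      linarith [hcastc]
    rw [hcoef, pow_add]
    ring
  rw [Finset.sum_congr rfl hterm, ← Finset.mul_sum]
  have hrange : K - t = M/2 + 1 := by omega
  rw [hrange, FevenPart M hModd x y]
  have hMne : (M:ℝ) ≠ 0 := by positivity
  have hex : M - 1 = 2*K-2*t-2 := by omega
  rw [hex]
  field_simp
  ring

noncomputable def Fphi (K : ℕ) (x y : ℝ) (j : ℕ) : ℝ :=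
  ∑ s ∈ Icc 1 (K-1), if j + 2*s ≤ 2*K+1 then FW K x y j s else 0

lemma Fphi_zero (K : ℕ) (hK : 2 ≤ K) (x y : ℝ) : Fphi K x y 0 = 0 := by
  refine Finset.sum_eq_zero fun s hs => ?_
  simp only [mem_Icc] at hs
  have hcond : 0 + 2*s ≤ 2*K+1 := by omega
  rw [if_pos hcond, FW]
  have hodd : Odd (2*K+1-2*s-0) := ⟨K-s, by omega⟩
  have hz : _root_.bernoulli (2*K+1-2*s-0) = 0 := FbernoulliOddZero hodd (by omega)
  rw [hz]
  push_cast
  ring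

lemma Fphi_even (K v : ℕ) (hK : 2 ≤ K) (hv1 : 1 ≤ v) (hv2 : v ≤ K-1) (x y : ℝ) :
    Fphi K x y (2*v) = (x+y)^(2*v) * (x^(2*K-1-2*v) + y^(2*K-1-2*v)) := by
  rw [Fphi]
  rw [Finset.sum_eq_single_of_mem (K-v) (by simp only [mem_Icc]; omega)]
  · have hcond : 2*v + 2*(K-v) ≤ 2*K+1 := by omega
    rw [if_pos hcond, FW]
    have h1 : 2*K+1-2*(K-v)-2*v = 1 := by omega
    rw [h1, _root_.bernoulli_one]
    have h2 : (2*K-1-2*v).choose 1 = 2*K-1-2*v := Nat.choose_one_right _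
    rw [h2]
    have h3 : 2*K-2*(K-v) = 2*v := by omega
    have h4 : 2*(K-v)-1 = 2*K-1-2*v := by omega
    rw [h3, h4]
    have hcast1 : ((2*K-1-2*v : ℕ) : ℝ) = 2*(K:ℝ) - 1 - 2*v := by
      push_cast [Nat.cast_sub (show 2*v ≤ 2*K-1 by omega), Nat.cast_sub (show 1 ≤ 2*K by omega)]
      ring
    have hcast2 : ((K-v : ℕ) : ℝ) = (K:ℝ) - v := by
      push_cast [Nat.cast_sub (show v ≤ K by omega)]
      ring
    rw [hcast1, hcast2]
    have hne : 2*((K:ℝ) - v) - 1 ≠ 0 := by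
      have : (1:ℝ) ≤ (K:ℝ) - v := by
        have h := congrArg (fun n : ℕ => (n : ℝ)) (show (K-v) + v = K by omega)
        push_cast at h
        have hv2' : (v:ℝ) ≤ (K:ℝ) - 1 := by
          have h' := congrArg (fun n : ℕ => (n : ℝ)) (show v + (K-1-v) + 1 = K by omega)
          push_cast at h'
          linarith
        linarith
      intro hcon
      linarith
    push_cast
    field_simp
    ring
  · intro s hs hne
    simp only [mem_Icc] at hs
    by_cases hcond : 2*v + 2*s ≤ 2*K+1
    · rw [if_pos hcond, FW]
      have hodd : Odd (2*K+1-2*s-2*v) := ⟨K-s-v, by omega⟩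
      have hz : _root_.bernoulli (2*K+1-2*s-2*v) = 0 := FbernoulliOddZero hodd (by omega)
      rw [hz]
      push_cast
      ring
    · rw [if_neg hcond]

lemma Fphi_odd (K t : ℕ) (hK : 2 ≤ K) (ht : t ≤ K-1) (x y : ℝ) :
    Fphi K x y (2*t+1) = -((x+y)^(2*t+1) * (x^(2*K-2*t-2) + y^(2*K-2*t-2)))
      + (if t = 0 then (2/(2*(K:ℝ)-1)) * (x^(2*K-1) + y^(2*K-1)) else 0) := by
  rcases Nat.eq_zero_or_pos t with ht0 | htpos
  · subst ht0
    rw [if_pos rfl, Fphi]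
    have hall : ∀ s ∈ Icc 1 (K-1), (if 2*0+1 + 2*s ≤ 2*K+1 then FW K x y (2*0+1) s else 0)
        = FW K x y (2*0+1) s := by
      intro s hs
      simp only [mem_Icc] at hs
      rw [if_pos (by omega)]
    rw [Finset.sum_congr rfl hall]
    have hsplit : ∑ s ∈ Icc 1 (K-0), FW K x y (2*0+1) s
        = ∑ s ∈ Icc 1 (K-1), FW K x y (2*0+1) s + FW K x y (2*0+1) K := by
      have hK0 : K - 0 = (K-1) + 1 := by omega
      rw [hK0, Finset.sum_Icc_succ_top (by omega)]
      congr 2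
      omega
    have hcore := FcoreSum K 0 hK (by omega) x y
    rw [hsplit] at hcore
    have hWK : FW K x y (2*0+1) K = (-2/(2*(K:ℝ)-1)) * (x^(2*K-1) + y^(2*K-1)) := by
      rw [FW]
      have h1 : 2*K+1-2*K-(2*0+1) = 0 := by omega
      have h2 : 2*K-1-(2*0+1) = 2*K-2 := by omega
      have h3 : 2*K-2*K = 0 := by omega
      have h4 : 2*K-1 = 2*K-1 := rfl
      rw [h1, h2, h3]
      have h5 : 2*K - 1 = 2*(K:ℕ) - 1 := rfl
      simp only [Nat.choose_zero_right, _root_.bernoulli_zero, pow_zero, Rat.cast_one]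
      push_cast
      ring
    rw [show (2*0+1 : ℕ) = 1 from rfl] at hcore hWK ⊢
    have heq : ∑ s ∈ Icc 1 (K-1), FW K x y 1 s
        = -((x+y)^1 * (x^(2*K-2*0-2) + y^(2*K-2*0-2))) - FW K x y 1 K := by
      linarith [hcore]
    show ∑ s ∈ Icc 1 (K-1), FW K x y 1 s = _
    rw [heq, hWK]
    ring
  · rw [if_neg (by omega), Fphi]
    have hfilter : ∑ s ∈ Icc 1 (K-1), (if 2*t+1 + 2*s ≤ 2*K+1 then FW K x y (2*t+1) s else 0)
        = ∑ s ∈ Icc 1 (K-t), FW K x y (2*t+1) s := by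
      rw [← Finset.sum_filter]
      apply Finset.sum_congr
      · ext s
        simp only [mem_filter, mem_Icc]
        omega
      · intro s _; rfl
    rw [hfilter, FcoreSum K t hK ht x y]
    ring

lemma FbinomAux (n i : ℕ) (hi : i < n) (x z : ℝ) :
    ∑ j ∈ range n, (i.choose j : ℝ) * ((-1)^j * z^j * x^(n-1-j)) = x^(n-1-i) * (x - z)^i := by
  rw [← Finset.sum_subset (Finset.range_subset_range.mpr (show i+1 ≤ n by omega))
    (fun j hjn hji => by
      simp only [mem_range] at hjn hji
      rw [Nat.choose_eq_zero_of_lt (by omega)]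
      push_cast
      ring)]
  rw [sub_eq_add_neg, add_comm x (-z), add_pow, Finset.mul_sum]
  refine Finset.sum_congr rfl fun j hj => ?_
  simp only [mem_range] at hj
  have hx : x^(n-1-j) = x^(n-1-i) * x^(i-j) := by
    rw [← pow_add]; congr 1; omega
  rw [hx, neg_pow]
  ring

end FpolyAux

open Finset

/-- **Main functional equation for `F`.**
For odd `k = 2K+1 ≥ 5` and `0 ≤ i ≤ k-2`, one has
`F_k^{(i)}(x+y, x) + F_k^{(i)}(x+y, y) = R_k^{(i)}(x, y)` for all real `x, y`. -/
theorem Fpoly_functional_equation (K i : ℕ) (hK : 2 ≤ K) (hi : i ≤ 2 * K + 1 - 2) :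
    ∀ x y : ℝ, Fpoly K i (x + y) x + Fpoly K i (x + y) y = Rpoly (2 * K + 1) i x y := by
  intro x y
  have hi' : i ≤ 2*K - 1 := by omega
  -- Step A: combine into a double sum
  have stepA : Fpoly K i (x+y) x + Fpoly K i (x+y) y
      = ∑ s ∈ Icc 1 (K-1), ∑ n ∈ range (2*K+2-2*s),
          (i.choose (2*K+1-2*s-n) : ℝ) * ((n+2*s-2).choose n : ℝ)
            * ((_root_.bernoulli n : ℚ) : ℝ) * (-2 / (2*(s:ℝ)-1))
            * (x+y)^(2*K-2*s) * (x^(2*s-1) + y^(2*s-1)) := by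
    have hgen : ∀ (c P Qx Qy : ℝ) (N : ℕ) (f : ℕ → ℝ),
        (c * ∑ n ∈ range N, f n) * P * Qx + (c * ∑ n ∈ range N, f n) * P * Qy
          = ∑ n ∈ range N, f n * c * P * (Qx + Qy) := by
      intro c P Qx Qy N f
      have h1 : ∑ n ∈ range N, f n * c * P * (Qx+Qy)
          = (∑ n ∈ range N, f n) * (c * P * (Qx+Qy)) := by
        rw [Finset.sum_mul]
        exact Finset.sum_congr rfl fun n _ => by ring
      rw [h1]
      ring
    rw [Fpoly, Fpoly, ← Finset.sum_add_distrib]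
    refine Finset.sum_congr rfl fun s hs => ?_
    simp only [mem_Icc] at hs
    push_cast
    rw [show 2*K+1-2*s+1 = 2*K+2-2*s by omega]
    exact hgen _ _ _ _ _ _
  -- Step B: reflect the inner sum
  have stepB : ∀ s ∈ Icc 1 (K-1),
      (∑ n ∈ range (2*K+2-2*s),
          (i.choose (2*K+1-2*s-n) : ℝ) * ((n+2*s-2).choose n : ℝ)
            * ((_root_.bernoulli n : ℚ) : ℝ) * (-2 / (2*(s:ℝ)-1))
            * (x+y)^(2*K-2*s) * (x^(2*s-1) + y^(2*s-1)))
        = ∑ j ∈ range (2*K+2-2*s), (i.choose j : ℝ) * FW K x y j s := by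
    intro s hs
    simp only [mem_Icc] at hs
    rw [← Finset.sum_range_reflect (fun j => (i.choose j : ℝ) * FW K x y j s) (2*K+2-2*s)]
    refine Finset.sum_congr rfl fun n hn => ?_
    simp only [mem_range] at hn
    rw [FW]
    rw [show 2*K+2-2*s-1-n = 2*K+1-2*s-n by omega]
    rw [show 2*K+1-2*s-(2*K+1-2*s-n) = n by omega]
    rw [show 2*K-1-(2*K+1-2*s-n) = n+2*s-2 by omega]
    ring
  rw [stepA, Finset.sum_congr rfl stepB]
  -- Step C: extend inner range, swap, and factor
  have stepC : ∀ s ∈ Icc 1 (K-1),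
      (∑ j ∈ range (2*K+2-2*s), (i.choose j : ℝ) * FW K x y j s)
        = ∑ j ∈ range (2*K), if j + 2*s ≤ 2*K+1 then (i.choose j : ℝ) * FW K x y j s else 0 := by
    intro s hs
    simp only [mem_Icc] at hs
    rw [← Finset.sum_filter]
    apply Finset.sum_congr
    · ext a
      simp only [mem_filter, mem_range]
      omega
    · intro j _; rfl
  rw [Finset.sum_congr rfl stepC, Finset.sum_comm]
  have stepF : ∀ j ∈ range (2*K),
      (∑ s ∈ Icc 1 (K-1), if j + 2*s ≤ 2*K+1 then (i.choose j : ℝ) * FW K x y j s else 0)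
        = (i.choose j : ℝ) * Fphi K x y j := by
    intro j _
    rw [Fphi, Finset.mul_sum]
    refine Finset.sum_congr rfl fun s _ => ?_
    rw [mul_ite, mul_zero]
  rw [Finset.sum_congr rfl stepF]
  -- Step D: evaluate Fphi and conclude
  have hFphi : ∀ j ∈ range (2*K), (i.choose j : ℝ) * Fphi K x y j
      = (i.choose j : ℝ) * ((-1)^j * (x+y)^j * (x^(2*K-1-j) + y^(2*K-1-j)))
        + (if j = 0 then -(x^(2*K-1) + y^(2*K-1)) else 0)
        + (if j = 1 then (i:ℝ) * (2/(2*(K:ℝ)-1)) * (x^(2*K-1) + y^(2*K-1)) else 0) := by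
    intro j hj
    simp only [mem_range] at hj
    rcases Nat.even_or_odd j with ⟨v, hv⟩ | ⟨t, htj⟩
    · have hj2 : j = 2*v := by omega
      subst hj2
      rcases Nat.eq_zero_or_pos v with hv0 | hvpos
      · subst hv0
        rw [Fphi_zero K hK x y]
        norm_num
      · rw [Fphi_even K v hK hvpos (by omega) x y]
        rw [if_neg (by omega), if_neg (by omega)]
        have : (-1 : ℝ)^(2*v) = 1 := by
          rw [pow_mul]
          norm_num
        rw [this]
        ring
    · have hj2 : j = 2*t+1 := by omega
      subst hj2
      rw [Fphi_odd K t hK (by omega) x y]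
      rw [if_neg (show ¬(2*t+1 = 0) by omega)]
      have hneg : (-1 : ℝ)^(2*t+1) = -1 := by
        rw [pow_succ, pow_mul]
        norm_num
      rw [hneg]
      rw [show 2*K-1-(2*t+1) = 2*K-2*t-2 by omega]
      rcases Nat.eq_zero_or_pos t with ht0 | htpos
      · subst ht0
        rw [if_pos rfl, if_pos (show (2*0+1 : ℕ) = 1 from rfl)]
        simp only [Nat.mul_zero, Nat.zero_add, Nat.choose_one_right]
        ring
      · rw [if_neg (show ¬(t = 0) by omega), if_neg (show ¬(2*t+1 = 1) by omega)]
        ring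
  rw [Finset.sum_congr rfl hFphi]
  rw [Finset.sum_add_distrib, Finset.sum_add_distrib]
  rw [Finset.sum_ite_eq' (range (2*K)) 0 (fun _ => -(x^(2*K-1) + y^(2*K-1)))]
  rw [Finset.sum_ite_eq' (range (2*K)) 1
    (fun _ => (i:ℝ) * (2/(2*(K:ℝ)-1)) * (x^(2*K-1) + y^(2*K-1)))]
  rw [if_pos (by simp only [mem_range]; omega), if_pos (by simp only [mem_range]; omega)]
  -- binomial sums
  have hbin : ∑ j ∈ range (2*K),
      (i.choose j : ℝ) * ((-1)^j * (x+y)^j * (x^(2*K-1-j) + y^(2*K-1-j)))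
      = x^(2*K-1-i) * (-y)^i + y^(2*K-1-i) * (-x)^i := by
    have hsplit : ∀ j ∈ range (2*K),
        (i.choose j : ℝ) * ((-1)^j * (x+y)^j * (x^(2*K-1-j) + y^(2*K-1-j)))
        = (i.choose j : ℝ) * ((-1)^j * (x+y)^j * x^(2*K-1-j))
          + (i.choose j : ℝ) * ((-1)^j * (x+y)^j * y^(2*K-1-j)) := by
      intro j _
      ring
    rw [Finset.sum_congr rfl hsplit, Finset.sum_add_distrib]
    rw [FbinomAux (2*K) i (by omega) x (x+y), FbinomAux (2*K) i (by omega) y (x+y)]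
    have h1 : x - (x+y) = -y := by ring
    have h2 : y - (x+y) = -x := by ring
    rw [h1, h2]
  rw [hbin]
  -- final algebra
  rw [Rpoly]
  rw [show 2*K+1-2 = 2*K-1 by omega]
  rw [neg_pow x i, neg_pow y i]
  have hKcast : ((2*K+1 : ℕ) : ℝ) = 2*(K:ℝ)+1 := by push_cast; ring
  rw [hKcast]
  have hKne : 2*(K:ℝ) - 1 ≠ 0 := by
    have : (2:ℝ) ≤ (K:ℝ) := by exact_mod_cast hK
    intro h
    linarith
  have hc : (2*(K:ℝ)+1-2-2*(i:ℝ))/(2*(K:ℝ)+1-2) = 1 - (i:ℝ)*(2/(2*(K:ℝ)-1)) := by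
    rw [show 2*(K:ℝ)+1-2 = 2*(K:ℝ)-1 by ring]
    field_simp
  rw [hc]
  ring
end

section
/- Let k = 2K+1 ≥ 5 be an odd integer and let i be an integer with 0 ≤ i ≤ k-2. Then for all real numbers x and y, G_k^{(i)}(x+y, x) + G_k^{(i)}(x+y, y) = R_k^{(i)}(x, y). -/
/-- `G_k^{(i)}(x,y)` for `k = 2K+1`:
`∑_{s=1}^{K-1} ((2/(2s-1)) · ∑_{n=0}^{k-2s} C(k-2-i,k-2s-n)·C(n+2s-2,n)·B_n) · x^{2K-2s} y^{2s-1}`. -/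
noncomputable def Gpoly (K i : ℕ) (x y : ℝ) : ℝ :=
  ∑ s ∈ Finset.Icc 1 (K - 1),
    (((2 / (2 * (s : ℚ) - 1)) * ∑ n ∈ Finset.range (2 * K + 1 - 2 * s + 1),
        (Nat.choose (2 * K + 1 - 2 - i) (2 * K + 1 - 2 * s - n) : ℚ)
          * (Nat.choose (n + 2 * s - 2) n : ℚ) * bernoulli n : ℚ) : ℝ)
      * x ^ (2 * K - 2 * s) * y ^ (2 * s - 1)

open Finset

private lemma sum_range_two_mul_s5 {M : Type*} [AddCommMonoid M] (n : ℕ) (f : ℕ → M) :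
    ∑ b ∈ range (2 * n), f b = ∑ t ∈ range n, (f (2 * t) + f (2 * t + 1)) := by
  induction n with
  | zero => simp
  | succ n ih =>
    have h : 2 * (n + 1) = 2 * n + 1 + 1 := by ring
    rw [h, sum_range_succ, sum_range_succ, ih, sum_range_succ]
    abel

private lemma aeval_bernoulli_expand (n : ℕ) (z : ℝ) :
    (Polynomial.aeval z) (Polynomial.bernoulli n)
      = ∑ b ∈ range (n + 1), ((bernoulli (n - b) : ℚ) : ℝ) * ((n.choose b : ℕ) : ℝ) * z ^ b := by
  rw [Polynomial.bernoulli_def, map_sum]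
  refine sum_congr rfl fun b _ => ?_
  rw [Polynomial.aeval_monomial, eq_ratCast]
  push_cast
  ring

private lemma aeval_bernoulli_one_add (n : ℕ) (z : ℝ) :
    (Polynomial.aeval (1 + z)) (Polynomial.bernoulli n)
      = (Polynomial.aeval z) (Polynomial.bernoulli n) + (n : ℝ) * z ^ (n - 1) := by
  have hpoly : (Polynomial.bernoulli n).comp (1 + Polynomial.X)
      = Polynomial.bernoulli n + Polynomial.C ((n : ℚ)) * Polynomial.X ^ (n - 1) := by
    apply Polynomial.funext
    intro r
    simp [Polynomial.eval_comp, Polynomial.bernoulli_eval_one_add]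
  have h2 := congrArg (Polynomial.aeval z) hpoly
  rw [Polynomial.aeval_comp] at h2
  simpa using h2

private lemma core (K j : ℕ) (hK : 1 ≤ K) (hj : j ≤ 2 * K - 1) (a : ℝ) :
    ∑ s ∈ Icc 1 K, (2 / (2 * (s : ℝ) - 1)) * (((2 * K - 1 - j).choose (2 * s - 2) : ℕ) : ℝ)
        * ((bernoulli (2 * K + 1 - 2 * s - j) : ℚ) : ℝ)
        * (a ^ (2 * s - 1) + (1 - a) ^ (2 * s - 1))
      = (-1) ^ (2 * K - 1 - j) * (a ^ (2 * K - 1 - j) + (1 - a) ^ (2 * K - 1 - j)) := by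
  have hN1 : (((2 * K - 1 - j) : ℕ) + 1 : ℝ) ≠ 0 := by positivity
  apply mul_left_cancel₀ hN1
  set N : ℕ := 2 * K - 1 - j with hN
  set F : ℕ → ℝ := fun b => ((bernoulli (N + 1 - b) : ℚ) : ℝ) * (((N + 1).choose b : ℕ) : ℝ)
      * ((a ^ b - (-a) ^ b) + ((1 - a) ^ b - (-(1 - a)) ^ b)) with hF
  have hFeven : ∀ r : ℕ, F (2 * r) = 0 := by
    intro r
    have h1 : (-a) ^ (2 * r) = a ^ (2 * r) := Even.neg_pow ⟨r, by ring⟩ a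
    have h2 : (-(1 - a)) ^ (2 * r) = (1 - a) ^ (2 * r) := Even.neg_pow ⟨r, by ring⟩ (1 - a)
    simp only [hF, h1, h2]
    ring
  have step1 : ((N : ℝ) + 1) * (∑ s ∈ Icc 1 K, (2 / (2 * (s : ℝ) - 1))
        * ((N.choose (2 * s - 2) : ℕ) : ℝ)
        * ((bernoulli (2 * K + 1 - 2 * s - j) : ℚ) : ℝ)
        * (a ^ (2 * s - 1) + (1 - a) ^ (2 * s - 1)))
      = ∑ s ∈ Icc 1 K, F (2 * s - 1) := by
    rw [mul_sum]
    refine sum_congr rfl fun s hs => ?_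
    obtain ⟨hs1, hs2⟩ := mem_Icc.mp hs
    have hodd : Odd (2 * s - 1) := ⟨s - 1, by omega⟩
    have h1 : (-a) ^ (2 * s - 1) = -a ^ (2 * s - 1) := Odd.neg_pow hodd a
    have h2 : (-(1 - a)) ^ (2 * s - 1) = -(1 - a) ^ (2 * s - 1) := Odd.neg_pow hodd (1 - a)
    by_cases hcase : 2 * s - 2 ≤ N
    · have hidx : 2 * K + 1 - 2 * s - j = N + 1 - (2 * s - 1) := by omega
      have hch : (N + 1) * N.choose (2 * s - 2) = (N + 1).choose (2 * s - 1) * (2 * s - 1) := by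
        have h4 : 2 * s - 1 = (2 * s - 2) + 1 := by omega
        rw [h4]
        exact Nat.add_one_mul_choose_eq N (2 * s - 2)
      have hs0 : (2 * (s : ℝ) - 1) ≠ 0 := by
        have : (1 : ℝ) ≤ (s : ℝ) := by exact_mod_cast hs1
        nlinarith
      have hchR : ((N : ℝ) + 1) * ((N.choose (2 * s - 2) : ℕ) : ℝ)
          = (((N + 1).choose (2 * s - 1) : ℕ) : ℝ) * (2 * (s : ℝ) - 1) := by
        have hcast : ((2 * s - 1 : ℕ) : ℝ) = 2 * (s : ℝ) - 1 := by
          have h5 : 1 ≤ 2 * s := by omega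
          push_cast [h5]
          ring
        rw [← hcast]
        exact_mod_cast hch
      simp only [hF, hidx, h1, h2]
      field_simp
      linear_combination (2 * ((bernoulli (N + 1 - (2 * s - 1)) : ℚ) : ℝ)
        * (a ^ (2 * s - 1) + (1 - a) ^ (2 * s - 1))) * hchR
    · have hz1 : N.choose (2 * s - 2) = 0 := Nat.choose_eq_zero_of_lt (by omega)
      have hz2 : (N + 1).choose (2 * s - 1) = 0 := Nat.choose_eq_zero_of_lt (by omega)
      simp only [hF, hz1, hz2]
      push_cast
      ring
  rw [step1]
  have step2 : ∑ s ∈ Icc 1 K, F (2 * s - 1) = ∑ t ∈ range K, (F (2 * t) + F (2 * t + 1)) := by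
    rw [← Finset.Ico_add_one_right_eq_Icc, Finset.sum_Ico_eq_sum_range]
    refine sum_congr (by norm_num) fun t _ => ?_
    have h6 : 2 * (1 + t) - 1 = 2 * t + 1 := by omega
    rw [h6, hFeven t, zero_add]
  rw [step2, ← sum_range_two_mul_s5]
  have step3 : ∑ b ∈ range (2 * K), F b = ∑ b ∈ range (N + 2), F b := by
    have h9 : ∑ b ∈ range (N + 2), F b = ∑ b ∈ range (2 * K + 1), F b := by
      apply Finset.sum_subset (Finset.range_subset_range.mpr (by omega))
      intro b hb hnb
      simp only [mem_range] at hb hnb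
      have hch0 : (N + 1).choose b = 0 := Nat.choose_eq_zero_of_lt (by omega)
      simp only [hF, hch0]
      push_cast
      ring
    calc ∑ b ∈ range (2 * K), F b
        = ∑ b ∈ range (2 * K + 1), F b := by rw [sum_range_succ, hFeven K, add_zero]
      _ = ∑ b ∈ range (N + 2), F b := h9.symm
  rw [step3]
  -- expand into four Bernoulli polynomial evaluations
  have step4 : ∑ b ∈ range (N + 2), F b
      = ((Polynomial.aeval a) (Polynomial.bernoulli (N + 1))
          - (Polynomial.aeval (-a)) (Polynomial.bernoulli (N + 1)))
        + ((Polynomial.aeval (1 - a)) (Polynomial.bernoulli (N + 1))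
          - (Polynomial.aeval (a - 1)) (Polynomial.bernoulli (N + 1))) := by
    rw [aeval_bernoulli_expand, aeval_bernoulli_expand, aeval_bernoulli_expand,
      aeval_bernoulli_expand, ← sum_sub_distrib, ← sum_sub_distrib, ← sum_add_distrib]
    refine sum_congr rfl fun b _ => ?_
    simp only [hF]
    ring
  rw [step4]
  have e1 : (Polynomial.aeval a) (Polynomial.bernoulli (N + 1))
      = (Polynomial.aeval (a - 1)) (Polynomial.bernoulli (N + 1)) + ((N : ℝ) + 1) * (a - 1) ^ N := by
    have h := aeval_bernoulli_one_add (N + 1) (a - 1)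
    rw [show (1 : ℝ) + (a - 1) = a by ring] at h
    simpa using h
  have e2 : (Polynomial.aeval (1 - a)) (Polynomial.bernoulli (N + 1))
      = (Polynomial.aeval (-a)) (Polynomial.bernoulli (N + 1)) + ((N : ℝ) + 1) * (-a) ^ N := by
    have h := aeval_bernoulli_one_add (N + 1) (-a)
    rw [show (1 : ℝ) + (-a) = 1 - a by ring] at h
    simpa using h
  rw [e1, e2]
  rw [neg_pow a N, show (a - 1 : ℝ) = -(1 - a) by ring, neg_pow (1 - a) N]
  ring

private lemma bin (m e : ℕ) (hme : m ≤ e) (z : ℝ) :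
    ∑ j ∈ range (e + 1), ((m.choose j : ℕ) : ℝ) * ((-1) ^ (e - j) * (z ^ (e - j)))
      = (-z) ^ (e - m) * (1 - z) ^ m := by
  have h1 : ∑ j ∈ range (m + 1), ((m.choose j : ℕ) : ℝ) * ((-1) ^ (e - j) * (z ^ (e - j)))
      = ∑ j ∈ range (e + 1), ((m.choose j : ℕ) : ℝ) * ((-1) ^ (e - j) * (z ^ (e - j))) := by
    apply Finset.sum_subset (Finset.range_subset_range.mpr (by omega))
    intro b hb hnb
    simp only [mem_range] at hb hnb
    have : m.choose b = 0 := Nat.choose_eq_zero_of_lt (by omega)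
    simp [this]
  rw [← h1]
  have h2 : ∀ j ∈ range (m + 1), ((m.choose j : ℕ) : ℝ) * ((-1) ^ (e - j) * (z ^ (e - j)))
      = ((m.choose j : ℕ) : ℝ) * (-z) ^ (e - j) := by
    intro j _
    rw [neg_pow]
    ring
  rw [sum_congr rfl h2, ← Finset.sum_range_reflect]
  have h3 : ∀ j ∈ range (m + 1), ((m.choose (m + 1 - 1 - j) : ℕ) : ℝ) * (-z) ^ (e - (m + 1 - 1 - j))
      = (-z) ^ (e - m) * (((m.choose j : ℕ) : ℝ) * (-z) ^ j) := by
    intro j hj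
    simp only [mem_range] at hj
    have hj' : j ≤ m := by omega
    have c1 : m + 1 - 1 - j = m - j := by omega
    have c2 : m.choose (m - j) = m.choose j := Nat.choose_symm hj'
    have c3 : e - (m - j) = (e - m) + j := by omega
    rw [c1, c2, c3, pow_add]
    ring
  rw [sum_congr rfl h3, ← mul_sum]
  congr 1
  have h4 := add_pow (-z) 1 m
  simp only [one_pow, mul_one] at h4
  have h5 : (-z + 1 : ℝ) = 1 - z := by ring
  rw [h5] at h4
  rw [h4]
  exact sum_congr rfl fun j _ => by ring

private lemma ida (K i : ℕ) (hK : 1 ≤ K) (hi : i ≤ 2 * K - 1) (a : ℝ) :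
    ∑ s ∈ Icc 1 K, (2 / (2 * (s : ℝ) - 1)
        * ∑ n ∈ range (2 * K + 1 - 2 * s + 1),
            (((2 * K - 1 - i).choose (2 * K + 1 - 2 * s - n) : ℕ) : ℝ)
              * (((n + 2 * s - 2).choose n : ℕ) : ℝ) * ((bernoulli n : ℚ) : ℝ))
        * (a ^ (2 * s - 1) + (1 - a) ^ (2 * s - 1))
      = (-1) ^ i * (a ^ (2 * K - 1 - i) * (1 - a) ^ i + a ^ i * (1 - a) ^ (2 * K - 1 - i)) := by
  have step1 : ∑ s ∈ Icc 1 K, (2 / (2 * (s : ℝ) - 1)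
        * ∑ n ∈ range (2 * K + 1 - 2 * s + 1),
            (((2 * K - 1 - i).choose (2 * K + 1 - 2 * s - n) : ℕ) : ℝ)
              * (((n + 2 * s - 2).choose n : ℕ) : ℝ) * ((bernoulli n : ℚ) : ℝ))
        * (a ^ (2 * s - 1) + (1 - a) ^ (2 * s - 1))
      = ∑ s ∈ Icc 1 K, ∑ j ∈ range (2 * K),
          (((2 * K - 1 - i).choose j : ℕ) : ℝ)
            * ((2 / (2 * (s : ℝ) - 1)) * (((2 * K - 1 - j).choose (2 * s - 2) : ℕ) : ℝ)
              * ((bernoulli (2 * K + 1 - 2 * s - j) : ℚ) : ℝ)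
              * (a ^ (2 * s - 1) + (1 - a) ^ (2 * s - 1))) := by
    refine sum_congr rfl fun s hs => ?_
    obtain ⟨hs1, hs2⟩ := mem_Icc.mp hs
    have hrefl : ∑ n ∈ range (2 * K + 1 - 2 * s + 1),
          (((2 * K - 1 - i).choose (2 * K + 1 - 2 * s - n) : ℕ) : ℝ)
            * (((n + 2 * s - 2).choose n : ℕ) : ℝ) * ((bernoulli n : ℚ) : ℝ)
        = ∑ j ∈ range (2 * K + 1 - 2 * s + 1),
            (((2 * K - 1 - i).choose j : ℕ) : ℝ)
              * (((2 * K - 1 - j).choose (2 * s - 2) : ℕ) : ℝ)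
              * ((bernoulli (2 * K + 1 - 2 * s - j) : ℚ) : ℝ) := by
      have hcongr : ∀ n ∈ range (2 * K + 1 - 2 * s + 1),
          (((2 * K - 1 - i).choose (2 * K + 1 - 2 * s - n) : ℕ) : ℝ)
            * (((n + 2 * s - 2).choose n : ℕ) : ℝ) * ((bernoulli n : ℚ) : ℝ)
          = (fun j => (((2 * K - 1 - i).choose j : ℕ) : ℝ)
              * (((2 * K - 1 - j).choose (2 * s - 2) : ℕ) : ℝ)
              * ((bernoulli (2 * K + 1 - 2 * s - j) : ℚ) : ℝ)) (2 * K + 1 - 2 * s + 1 - 1 - n) := by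
        intro n hn
        simp only [mem_range] at hn
        simp only []
        have c1 : 2 * K + 1 - 2 * s + 1 - 1 - n = 2 * K + 1 - 2 * s - n := by omega
        have c2 : 2 * K - 1 - (2 * K + 1 - 2 * s - n) = n + 2 * s - 2 := by omega
        have c3 : 2 * K + 1 - 2 * s - (2 * K + 1 - 2 * s - n) = n := by omega
        have c4 : (n + 2 * s - 2).choose (2 * s - 2) = (n + 2 * s - 2).choose n := by
          have h := Nat.choose_symm (show n ≤ n + 2 * s - 2 by omega)
          rwa [show n + 2 * s - 2 - n = 2 * s - 2 by omega] at h
        rw [c1, c2, c3, c4]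
      rw [sum_congr rfl hcongr]
      exact Finset.sum_range_reflect (fun j => (((2 * K - 1 - i).choose j : ℕ) : ℝ)
        * (((2 * K - 1 - j).choose (2 * s - 2) : ℕ) : ℝ)
        * ((bernoulli (2 * K + 1 - 2 * s - j) : ℚ) : ℝ)) (2 * K + 1 - 2 * s + 1)
    rw [hrefl]
    have hext : ∑ j ∈ range (2 * K + 1 - 2 * s + 1),
          (((2 * K - 1 - i).choose j : ℕ) : ℝ)
            * (((2 * K - 1 - j).choose (2 * s - 2) : ℕ) : ℝ)
            * ((bernoulli (2 * K + 1 - 2 * s - j) : ℚ) : ℝ)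
        = ∑ j ∈ range (2 * K),
            (((2 * K - 1 - i).choose j : ℕ) : ℝ)
              * (((2 * K - 1 - j).choose (2 * s - 2) : ℕ) : ℝ)
              * ((bernoulli (2 * K + 1 - 2 * s - j) : ℚ) : ℝ) := by
      apply Finset.sum_subset (Finset.range_subset_range.mpr (by omega))
      intro b hb hnb
      simp only [mem_range] at hb hnb
      have : (2 * K - 1 - b).choose (2 * s - 2) = 0 := Nat.choose_eq_zero_of_lt (by omega)
      simp [this]
    rw [hext, mul_sum, sum_mul]
    exact sum_congr rfl fun j _ => by ring
  rw [step1, Finset.sum_comm]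
  have step2 : ∀ j ∈ range (2 * K),
      ∑ s ∈ Icc 1 K, (((2 * K - 1 - i).choose j : ℕ) : ℝ)
          * ((2 / (2 * (s : ℝ) - 1)) * (((2 * K - 1 - j).choose (2 * s - 2) : ℕ) : ℝ)
            * ((bernoulli (2 * K + 1 - 2 * s - j) : ℚ) : ℝ)
            * (a ^ (2 * s - 1) + (1 - a) ^ (2 * s - 1)))
      = (((2 * K - 1 - i).choose j : ℕ) : ℝ)
          * ((-1) ^ (2 * K - 1 - j) * (a ^ (2 * K - 1 - j) + (1 - a) ^ (2 * K - 1 - j))) := by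
    intro j hj
    simp only [mem_range] at hj
    rw [← Finset.mul_sum, core K j hK (by omega) a]
  rw [sum_congr rfl step2]
  have hsplit : ∑ j ∈ range (2 * K),
      (((2 * K - 1 - i).choose j : ℕ) : ℝ)
        * ((-1) ^ (2 * K - 1 - j) * (a ^ (2 * K - 1 - j) + (1 - a) ^ (2 * K - 1 - j)))
      = (∑ j ∈ range (2 * K - 1 + 1), (((2 * K - 1 - i).choose j : ℕ) : ℝ)
            * ((-1) ^ (2 * K - 1 - j) * (a ^ (2 * K - 1 - j))))
        + (∑ j ∈ range (2 * K - 1 + 1), (((2 * K - 1 - i).choose j : ℕ) : ℝ)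
            * ((-1) ^ (2 * K - 1 - j) * ((1 - a) ^ (2 * K - 1 - j)))) := by
    rw [show 2 * K - 1 + 1 = 2 * K by omega, ← sum_add_distrib]
    exact sum_congr rfl fun j _ => by ring
  rw [hsplit]
  rw [bin (2 * K - 1 - i) (2 * K - 1) (by omega) a,
    bin (2 * K - 1 - i) (2 * K - 1) (by omega) (1 - a)]
  have he : 2 * K - 1 - (2 * K - 1 - i) = i := by omega
  rw [he]
  rw [show (1 : ℝ) - (1 - a) = a by ring]
  rw [neg_pow a i, neg_pow (1 - a) i]
  ring

private lemma key (K i : ℕ) (hK : 1 ≤ K) (hi : i ≤ 2 * K - 1) (x y : ℝ) :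
    ∑ s ∈ Icc 1 K, (2 / (2 * (s : ℝ) - 1)
        * ∑ n ∈ range (2 * K + 1 - 2 * s + 1),
            (((2 * K - 1 - i).choose (2 * K + 1 - 2 * s - n) : ℕ) : ℝ)
              * (((n + 2 * s - 2).choose n : ℕ) : ℝ) * ((bernoulli n : ℚ) : ℝ))
        * ((x + y) ^ (2 * K - 2 * s) * x ^ (2 * s - 1)
            + (x + y) ^ (2 * K - 2 * s) * y ^ (2 * s - 1))
      = (-1) ^ i * (x ^ (2 * K - 1 - i) * y ^ i + x ^ i * y ^ (2 * K - 1 - i)) := by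
  by_cases hxy : x + y = 0
  · have hy : y = -x := by linarith
    subst hy
    have hL : ∀ s ∈ Icc 1 K, (2 / (2 * (s : ℝ) - 1)
        * ∑ n ∈ range (2 * K + 1 - 2 * s + 1),
            (((2 * K - 1 - i).choose (2 * K + 1 - 2 * s - n) : ℕ) : ℝ)
              * (((n + 2 * s - 2).choose n : ℕ) : ℝ) * ((bernoulli n : ℚ) : ℝ))
        * ((x + -x) ^ (2 * K - 2 * s) * x ^ (2 * s - 1)
            + (x + -x) ^ (2 * K - 2 * s) * (-x) ^ (2 * s - 1)) = 0 := by
      intro s hs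
      obtain ⟨hs1, _⟩ := mem_Icc.mp hs
      have hodd : (-x) ^ (2 * s - 1) = -x ^ (2 * s - 1) := Odd.neg_pow ⟨s - 1, by omega⟩ x
      rw [hodd]
      ring
    rw [sum_eq_zero hL]
    have h2 : (-1 : ℝ) ^ i * (-1) ^ i = 1 := by
      rw [← pow_add]; exact Even.neg_one_pow ⟨i, rfl⟩
    have h3 : (-1 : ℝ) ^ i * (-1) ^ (2 * K - 1 - i) = -1 := by
      rw [← pow_add, show i + (2 * K - 1 - i) = 2 * K - 1 by omega]
      exact Odd.neg_one_pow ⟨K - 1, by omega⟩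
    rw [neg_pow x i, neg_pow x (2 * K - 1 - i)]
    linear_combination (-(x ^ (2 * K - 1 - i) * x ^ i)) * h2
      + (-(x ^ (2 * K - 1 - i) * x ^ i)) * h3
  · set u : ℝ := x + y with hu
    set a : ℝ := x / u with ha
    have hx : x = u * a := by
      rw [ha]
      field_simp
    have hy : y = u * (1 - a) := by
      have : u * (1 - a) = u - u * a := by ring
      rw [this, ← hx, hu]
      ring
    rw [hx, hy]
    have hL : ∑ s ∈ Icc 1 K, (2 / (2 * (s : ℝ) - 1)
        * ∑ n ∈ range (2 * K + 1 - 2 * s + 1),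
            (((2 * K - 1 - i).choose (2 * K + 1 - 2 * s - n) : ℕ) : ℝ)
              * (((n + 2 * s - 2).choose n : ℕ) : ℝ) * ((bernoulli n : ℚ) : ℝ))
        * (u ^ (2 * K - 2 * s) * (u * a) ^ (2 * s - 1)
            + u ^ (2 * K - 2 * s) * (u * (1 - a)) ^ (2 * s - 1))
      = u ^ (2 * K - 1) * ∑ s ∈ Icc 1 K, (2 / (2 * (s : ℝ) - 1)
        * ∑ n ∈ range (2 * K + 1 - 2 * s + 1),
            (((2 * K - 1 - i).choose (2 * K + 1 - 2 * s - n) : ℕ) : ℝ)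
              * (((n + 2 * s - 2).choose n : ℕ) : ℝ) * ((bernoulli n : ℚ) : ℝ))
        * (a ^ (2 * s - 1) + (1 - a) ^ (2 * s - 1)) := by
      rw [mul_sum]
      refine sum_congr rfl fun s hs => ?_
      obtain ⟨hs1, hs2⟩ := mem_Icc.mp hs
      have hpow : u ^ (2 * K - 2 * s) * u ^ (2 * s - 1) = u ^ (2 * K - 1) := by
        rw [← pow_add]; congr 1; omega
      rw [mul_pow u a, mul_pow u (1 - a), ← hpow]
      ring
    rw [hL, ida K i hK hi a]
    have hR1 : (u * a) ^ (2 * K - 1 - i) * (u * (1 - a)) ^ i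
        = u ^ (2 * K - 1) * (a ^ (2 * K - 1 - i) * (1 - a) ^ i) := by
      rw [mul_pow, mul_pow, ← mul_assoc, mul_comm (u ^ (2 * K - 1 - i)) _,
        mul_assoc (a ^ (2 * K - 1 - i))]
      rw [← pow_add]
      rw [show 2 * K - 1 - i + i = 2 * K - 1 by omega]
      ring
    have hR2 : (u * a) ^ i * (u * (1 - a)) ^ (2 * K - 1 - i)
        = u ^ (2 * K - 1) * (a ^ i * (1 - a) ^ (2 * K - 1 - i)) := by
      rw [mul_pow, mul_pow, ← mul_assoc, mul_comm (u ^ i) _, mul_assoc (a ^ i)]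
      rw [← pow_add]
      rw [show i + (2 * K - 1 - i) = 2 * K - 1 by omega]
      ring
    rw [hR1, hR2]
    ring

/-- **Main functional equation for `G`.**
For odd `k = 2K+1 ≥ 5` and `0 ≤ i ≤ k-2`, one has
`G_k^{(i)}(x+y, x) + G_k^{(i)}(x+y, y) = R_k^{(i)}(x, y)` for all real `x, y`. -/
theorem Gpoly_functional_equation (K i : ℕ) (hK : 2 ≤ K) (hi : i ≤ 2 * K + 1 - 2) :
    ∀ x y : ℝ, Gpoly K i (x + y) x + Gpoly K i (x + y) y = Rpoly (2 * K + 1) i x y := by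
  intro x y
  have hi' : i ≤ 2 * K - 1 := by omega
  have hKR : (2 * (K : ℝ) - 1) ≠ 0 := by
    have : (2 : ℝ) ≤ (K : ℝ) := by exact_mod_cast hK
    nlinarith
  -- the real-valued coefficient
  set c : ℕ → ℝ := fun s => 2 / (2 * (s : ℝ) - 1)
        * ∑ n ∈ range (2 * K + 1 - 2 * s + 1),
            (((2 * K - 1 - i).choose (2 * K + 1 - 2 * s - n) : ℕ) : ℝ)
              * (((n + 2 * s - 2).choose n : ℕ) : ℝ) * ((bernoulli n : ℚ) : ℝ) with hc
  have hG : ∀ v : ℝ, Gpoly K i (x + y) v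
      = ∑ s ∈ Icc 1 (K - 1), c s * ((x + y) ^ (2 * K - 2 * s) * v ^ (2 * s - 1)) := by
    intro v
    simp only [Gpoly]
    refine sum_congr rfl fun s hs => ?_
    rw [show 2 * K + 1 - 2 = 2 * K - 1 from by omega, hc]
    push_cast
    ring
  -- value of the top coefficient
  have hcK : c K = (2 * (K : ℝ) - 1 - 2 * (i : ℝ)) / (2 * (K : ℝ) - 1) := by
    rw [hc]
    simp only []
    rw [show 2 * K + 1 - 2 * K + 1 = 2 from by omega]
    rw [Finset.sum_range_succ, Finset.sum_range_one]
    rw [show 2 * K + 1 - 2 * K - 0 = 1 from by omega,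
      show 2 * K + 1 - 2 * K - 1 = 0 from by omega,
      show 1 + 2 * K - 2 = 2 * K - 1 from by omega]
    rw [Nat.choose_one_right, Nat.choose_zero_right, Nat.choose_zero_right,
      Nat.choose_one_right, bernoulli_zero, bernoulli_one]
    have hcast : ((2 * K - 1 - i : ℕ) : ℝ) = 2 * (K : ℝ) - 1 - (i : ℝ) := by
      have h1 : i ≤ 2 * K - 1 := hi'
      have h2 : 1 ≤ 2 * K := by omega
      push_cast [h1, h2]
      ring
    have hcast2 : ((2 * K - 1 : ℕ) : ℝ) = 2 * (K : ℝ) - 1 := by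
      have h2 : 1 ≤ 2 * K := by omega
      push_cast [h2]
      ring
    rw [hcast, hcast2]
    push_cast
    field_simp
    ring
  -- split the completed sum
  have hsplit : ∀ f : ℕ → ℝ, ∑ s ∈ Icc 1 K, f s = (∑ s ∈ Icc 1 (K - 1), f s) + f K := by
    intro f
    have h1 : K = (K - 1) + 1 := by omega
    rw [h1, Finset.sum_Icc_succ_top (by omega : 1 ≤ (K - 1) + 1)]
    norm_num
  have hkey := key K i (by omega) hi' x y
  rw [hsplit] at hkey
  have htop : c K * ((x + y) ^ (2 * K - 2 * K) * x ^ (2 * K - 1)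
        + (x + y) ^ (2 * K - 2 * K) * y ^ (2 * K - 1))
      = (2 * (K : ℝ) - 1 - 2 * (i : ℝ)) / (2 * (K : ℝ) - 1) * (x ^ (2 * K - 1) + y ^ (2 * K - 1)) := by
    rw [show 2 * K - 2 * K = 0 from by omega, pow_zero, hcK]
    ring
  rw [htop] at hkey
  -- expand Gpoly and Rpoly, finish
  rw [hG x, hG y]
  have hRpoly : Rpoly (2 * K + 1) i x y
      = -((2 * (K : ℝ) - 1 - 2 * (i : ℝ)) / (2 * (K : ℝ) - 1)) * x ^ (2 * K - 1)
        + (-1) ^ i * x ^ (2 * K - 1 - i) * y ^ i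
        + (-1) ^ i * x ^ i * y ^ (2 * K - 1 - i)
        - ((2 * (K : ℝ) - 1 - 2 * (i : ℝ)) / (2 * (K : ℝ) - 1)) * y ^ (2 * K - 1) := by
    simp only [Rpoly]
    rw [show 2 * K + 1 - 2 = 2 * K - 1 from by omega]
    push_cast
    ring_nf
  rw [hRpoly]
  have hcombine : ∑ s ∈ Icc 1 (K - 1), c s * ((x + y) ^ (2 * K - 2 * s) * x ^ (2 * s - 1))
        + ∑ s ∈ Icc 1 (K - 1), c s * ((x + y) ^ (2 * K - 2 * s) * y ^ (2 * s - 1))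
      = ∑ s ∈ Icc 1 (K - 1), c s * ((x + y) ^ (2 * K - 2 * s) * x ^ (2 * s - 1)
          + (x + y) ^ (2 * K - 2 * s) * y ^ (2 * s - 1)) := by
    rw [← sum_add_distrib]
    exact sum_congr rfl fun s _ => by ring
  rw [hcombine]
  linarith [hkey]
end

section
/- Let k = 2K+1 ≥ 5 be an odd integer and let i be an integer with 0 ≤ i ≤ k-2. Then for every fixed real number x, the second derivative with respect to y of the function y ↦ F_k^{(i)}(x, y) equals (k-2-i)(k-3-i) · F_{k-2}^{(i)}(x, y) - 2i(k-2-i) · G_{k-2}^{(k-3-i)}(x, y) + i(i-1) · F_{k-2}^{(i-2)}(x, y), where any term whose scalar coefficient vanishes (in particular those with superscript i-2 < 0 when i ≤ 1, or with superscript k-3-i out of range) is interpreted as zero. -/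
lemma myL1 (n t : ℕ) :
    ((t:ℚ)+1) * ((t:ℚ)+2) * (Nat.choose (n + t + 2) n : ℚ)
      = ((n:ℚ)+(t:ℚ)+1) * ((n:ℚ)+(t:ℚ)+2) * (Nat.choose (n + t) n : ℚ) := by
  have e2 : (n + t + 2).choose n = (n + t + 2).choose (t + 2) := by
    rw [show n + t + 2 = n + (t + 2) by omega]
    exact Nat.choose_symm_add
  have e0 : (n + t).choose n = (n + t).choose t := Nat.choose_symm_add
  have a1 : (n + t + 1) * (n + t).choose t = (n + t + 1).choose (t + 1) * (t + 1) := by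
    simpa using Nat.add_one_mul_choose_eq (n + t) t
  have a2 : (n + t + 2) * (n + t + 1).choose (t + 1) = (n + t + 2).choose (t + 2) * (t + 2) := by
    simpa using Nat.add_one_mul_choose_eq (n + t + 1) (t + 1)
  have a1q : ((n:ℚ) + t + 1) * ((n + t).choose t : ℚ)
      = ((n + t + 1).choose (t + 1) : ℚ) * ((t:ℚ) + 1) := by exact_mod_cast a1
  have a2q : ((n:ℚ) + t + 2) * ((n + t + 1).choose (t + 1) : ℚ)
      = ((n + t + 2).choose (t + 2) : ℚ) * ((t:ℚ) + 2) := by exact_mod_cast a2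
  rw [e2, e0]
  linear_combination (-((t:ℚ)+1)) * a2q + (-((n:ℚ)+t+2)) * a1q

lemma myL2 (i j : ℕ) :
    ((i:ℚ) - j) * (Nat.choose i j : ℚ) = (i:ℚ) * (Nat.choose (i-1) j : ℚ) := by
  rcases i with _ | i'
  · rcases j with _ | j' <;> simp
  · by_cases h : j ≤ i' + 1
    · have hnat : (i').choose j * (i' + 1) = (i'+1).choose j * (i' + 1 - j) :=
        Nat.choose_mul_succ_eq i' j
      have hq : ((i').choose j : ℚ) * ((i':ℚ) + 1)
          = ((i'+1).choose j : ℚ) * (((i':ℚ) + 1) - j) := by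
        rw [show ((i':ℚ) + 1) - j = (((i' + 1 - j : ℕ)):ℚ) by
          rw [Nat.cast_sub h]; push_cast; ring]
        exact_mod_cast hnat
      push_cast
      linear_combination -hq
    · have h1 : Nat.choose (i'+1) j = 0 := Nat.choose_eq_zero_of_lt (by omega)
      have h2 : Nat.choose (i'+1-1) j = 0 := Nat.choose_eq_zero_of_lt (by omega)
      rw [h1, h2]
      simp

lemma myL3 (i j : ℕ) :
    ((i:ℚ) - j) * ((i:ℚ) - j - 1) * (Nat.choose i j : ℚ)
      = (i:ℚ) * ((i:ℚ) - 1) * (Nat.choose (i-2) j : ℚ) := by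
  rcases i with _ | i'
  · rcases j with _ | j' <;> simp
  · have h1 := myL2 (i'+1) j
    have h2 := myL2 i' j
    rw [show i' + 1 - 2 = i' - 1 by omega]
    rw [show i' + 1 - 1 = i' by omega] at h1
    push_cast at h1 h2 ⊢
    linear_combination ((i':ℚ) - j) * h1 + ((i':ℚ) + 1) * h2

lemma myL4 (c : ℚ) (i j : ℕ) :
    (c - j) * (c - j - 1) * (Nat.choose i j : ℚ)
      = (c - i) * (c - i - 1) * (Nat.choose i j : ℚ)
        + 2*(i:ℚ)*(c - i) * (Nat.choose (i-1) j : ℚ)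
        + (i:ℚ)*((i:ℚ)-1) * (Nat.choose (i-2) j : ℚ) := by
  linear_combination (2*(c - (i:ℚ))) * myL2 i j + myL3 i j

lemma key_n (K i u d n : ℕ) (hu1 : 1 ≤ u) (hu2 : u ≤ K - 2) (hK : 3 ≤ K)
    (hd : (i:ℚ) * (2*(K:ℚ) - 1 - (i:ℚ)) = 0 ∨ d = i - 1)
    (hn : n < 2*(K-1)+1-2*u+1) :
    (2*(u:ℚ)-1) * (2*(u:ℚ)) *
      ((Nat.choose i (2*K+1-2*(u+1)-n) : ℚ) * (Nat.choose (n+2*(u+1)-2) n : ℚ) * bernoulli n)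
    = (2*(K:ℚ)-1-(i:ℚ)) * (2*(K:ℚ)-2-(i:ℚ)) *
        ((Nat.choose i (2*(K-1)+1-2*u-n):ℚ) * (Nat.choose (n+2*u-2) n:ℚ) * bernoulli n)
      + 2*(i:ℚ)*(2*(K:ℚ)-1-(i:ℚ)) *
        ((Nat.choose d (2*(K-1)+1-2*u-n):ℚ) * (Nat.choose (n+2*u-2) n:ℚ) * bernoulli n)
      + (i:ℚ)*((i:ℚ)-1) *
        ((Nat.choose (i-2) (2*(K-1)+1-2*u-n):ℚ) * (Nat.choose (n+2*u-2) n:ℚ) * bernoulli n) := by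
  obtain ⟨v, rfl⟩ : ∃ v, u = v + 1 := ⟨u-1, by omega⟩
  rw [show 2*K+1-2*((v+1)+1)-n = 2*(K-1)+1-2*(v+1)-n by omega,
      show n+2*((v+1)+1)-2 = n+2*v+2 by omega,
      show n+2*(v+1)-2 = n+2*v by omega]
  set j := 2*(K-1)+1-2*(v+1)-n with hjdef
  have h2 : j + n + (2*v+3) = 2*K := by omega
  have hj : (j:ℚ) = 2*(K:ℚ) - 2*(v:ℚ) - 3 - (n:ℚ) := by
    have := congrArg (Nat.cast (R := ℚ)) h2
    push_cast at this
    linarith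
  have hL1 := myL1 n (2*v)
  have hL4 := myL4 (2*(K:ℚ)-1) i j
  rw [hj] at hL4
  have hG : 2*(i:ℚ)*(2*(K:ℚ)-1-(i:ℚ)) * (Nat.choose d j : ℚ)
      = 2*(i:ℚ)*(2*(K:ℚ)-1-(i:ℚ)) * (Nat.choose (i-1) j : ℚ) := by
    rcases hd with h | h
    · rw [show 2*(i:ℚ)*(2*(K:ℚ)-1-(i:ℚ)) = 2*((i:ℚ)*(2*(K:ℚ)-1-(i:ℚ))) by ring, h]
      ring
    · rw [h]
  push_cast at hL1 hL4 hG ⊢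
  linear_combination (bernoulli n * (Nat.choose i j : ℚ)) * hL1
    + (bernoulli n * (Nat.choose (n+2*v) n : ℚ)) * hL4
    - (bernoulli n * (Nat.choose (n+2*v) n : ℚ)) * hG

lemma key_s6 (K i u d : ℕ) (hu1 : 1 ≤ u) (hu2 : u ≤ K - 2) (hK : 3 ≤ K)
    (hd : (i:ℚ) * (2*(K:ℚ) - 1 - (i:ℚ)) = 0 ∨ d = i - 1) :
    (2*(u:ℚ)+1) * (2*(u:ℚ)) *
      ((-2 / (2 * ((u+1 : ℕ):ℚ) - 1)) * ∑ n ∈ Finset.range (2*K+1-2*(u+1)+1),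
        (Nat.choose i (2*K+1-2*(u+1)-n) : ℚ) * (Nat.choose (n+2*(u+1)-2) n : ℚ) * bernoulli n)
    = (2*(K:ℚ)-1-(i:ℚ)) * (2*(K:ℚ)-2-(i:ℚ)) *
        ((-2 / (2*(u:ℚ)-1)) * ∑ n ∈ Finset.range (2*(K-1)+1-2*u+1),
          (Nat.choose i (2*(K-1)+1-2*u-n) : ℚ) * (Nat.choose (n+2*u-2) n : ℚ) * bernoulli n)
      - 2*(i:ℚ)*(2*(K:ℚ)-1-(i:ℚ)) *
        ((2 / (2*(u:ℚ)-1)) * ∑ n ∈ Finset.range (2*(K-1)+1-2*u+1),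
          (Nat.choose d (2*(K-1)+1-2*u-n) : ℚ) * (Nat.choose (n+2*u-2) n : ℚ) * bernoulli n)
      + (i:ℚ)*((i:ℚ)-1) *
        ((-2 / (2*(u:ℚ)-1)) * ∑ n ∈ Finset.range (2*(K-1)+1-2*u+1),
          (Nat.choose (i-2) (2*(K-1)+1-2*u-n) : ℚ) * (Nat.choose (n+2*u-2) n : ℚ) * bernoulli n) := by
  rw [show 2*K+1-2*(u+1)+1 = 2*(K-1)+1-2*u+1 by omega]
  set S1 := ∑ n ∈ Finset.range (2*(K-1)+1-2*u+1),
      (Nat.choose i (2*K+1-2*(u+1)-n) : ℚ) * (Nat.choose (n+2*(u+1)-2) n : ℚ) * bernoulli n with hS1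
  set S2 := ∑ n ∈ Finset.range (2*(K-1)+1-2*u+1),
      (Nat.choose i (2*(K-1)+1-2*u-n) : ℚ) * (Nat.choose (n+2*u-2) n : ℚ) * bernoulli n with hS2
  set S3 := ∑ n ∈ Finset.range (2*(K-1)+1-2*u+1),
      (Nat.choose d (2*(K-1)+1-2*u-n) : ℚ) * (Nat.choose (n+2*u-2) n : ℚ) * bernoulli n with hS3
  set S4 := ∑ n ∈ Finset.range (2*(K-1)+1-2*u+1),
      (Nat.choose (i-2) (2*(K-1)+1-2*u-n) : ℚ) * (Nat.choose (n+2*u-2) n : ℚ) * bernoulli n with hS4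
  have hmain : (2*(u:ℚ)-1) * (2*(u:ℚ)) * S1
      = (2*(K:ℚ)-1-(i:ℚ)) * (2*(K:ℚ)-2-(i:ℚ)) * S2
        + 2*(i:ℚ)*(2*(K:ℚ)-1-(i:ℚ)) * S3
        + (i:ℚ)*((i:ℚ)-1) * S4 := by
    rw [hS1, hS2, hS3, hS4]
    simp only [Finset.mul_sum]
    rw [← Finset.sum_add_distrib, ← Finset.sum_add_distrib]
    refine Finset.sum_congr rfl fun n hn => ?_
    exact key_n K i u d n hu1 hu2 hK hd (Finset.mem_range.mp hn)
  have hD : 2*((u+1:ℕ):ℚ) - 1 = 2*(u:ℚ)+1 := by push_cast; ring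
  rw [hD]
  have h2u1 : (2*(u:ℚ)+1) ≠ 0 := by positivity
  have h2um : (2*(u:ℚ)-1) ≠ 0 := by
    have : (1:ℚ) ≤ (u:ℚ) := by exact_mod_cast hu1
    intro h
    linarith
  have hL : (2*(u:ℚ)+1) * (2*(u:ℚ)) * (-2/(2*(u:ℚ)+1) * S1)
      = -2/(2*(u:ℚ)-1) * ((2*(u:ℚ)-1) * (2*(u:ℚ)) * S1) := by
    field_simp
  linear_combination hL + (-2/(2*(u:ℚ)-1)) * hmain

lemma deriv2_sum (S : Finset ℕ) (a : ℕ → ℝ) (y : ℝ) :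
    deriv (deriv (fun t : ℝ => ∑ s ∈ S, a s * t ^ (2*s-1))) y
      = ∑ s ∈ S, a s * (((2*s-1 : ℕ):ℝ) * (((2*s-1-1 : ℕ):ℝ) * y ^ (2*s-1-1-1))) := by
  have h1 : deriv (fun t : ℝ => ∑ s ∈ S, a s * t ^ (2*s-1))
      = fun z : ℝ => ∑ s ∈ S, a s * (((2*s-1 : ℕ):ℝ) * z ^ (2*s-1-1)) := by
    funext z
    exact (HasDerivAt.fun_sum fun s _ => (hasDerivAt_pow (2*s-1) z).const_mul (a s)).deriv
  rw [h1]
  exact (HasDerivAt.fun_sum fun s _ =>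
    (((hasDerivAt_pow (2*s-1-1) y).const_mul ((2*s-1 : ℕ):ℝ)).const_mul (a s))).deriv

lemma shift_sum (K : ℕ) (hK : 2 ≤ K) (a : ℕ → ℝ) (g : ℕ → ℝ) :
    ∑ s ∈ Finset.Icc 1 (K-1), a s * (((2*s-1 : ℕ):ℝ) * (((2*s-1-1 : ℕ):ℝ) * g s))
      = ∑ u ∈ Finset.Icc 1 (K-2),
          a (u+1) * (((2*(u+1)-1 : ℕ):ℝ) * (((2*(u+1)-1-1 : ℕ):ℝ) * g (u+1))) := by
  have hz : ∀ s ∈ Finset.Icc 1 (K-1), s ∉ Finset.Icc 2 (K-1) →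
      a s * (((2*s-1 : ℕ):ℝ) * (((2*s-1-1 : ℕ):ℝ) * g s)) = 0 := by
    intro s hs hns
    have : s = 1 := by
      simp only [Finset.mem_Icc] at hs hns
      omega
    subst this
    norm_num
  rw [← Finset.sum_subset (fun s hs => by
      simp only [Finset.mem_Icc] at *; omega) hz]
  rw [show Finset.Icc 2 (K-1) = Finset.map (addRightEmbedding 1) (Finset.Icc 1 (K-2)) by
    rw [Finset.map_add_right_Icc]; congr 1 <;> omega]
  rw [Finset.sum_map]
  simp only [addRightEmbedding_apply]


/-- **Second derivative of `F` in `y`.**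
For odd `k = 2K+1 ≥ 5` and `0 ≤ i ≤ k-2`, for every fixed real `x`,
`∂²/∂y² F_k^{(i)}(x,y) = (k-2-i)(k-3-i)·F_{k-2}^{(i)}(x,y)
  - 2i(k-2-i)·G_{k-2}^{(k-3-i)}(x,y) + i(i-1)·F_{k-2}^{(i-2)}(x,y)`
(note `k-2 = 2(K-1)+1`; superscripts are truncated natural subtractions, which is
harmless since the corresponding scalar coefficients then vanish). -/
theorem Fpoly_second_deriv (K i : ℕ) (hK : 2 ≤ K) (hi : i ≤ 2 * K + 1 - 2) :
    ∀ x y : ℝ, deriv (deriv (fun t : ℝ => Fpoly K i x t)) y =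
      ((2 * K + 1 : ℝ) - 2 - (i : ℝ)) * ((2 * K + 1 : ℝ) - 3 - (i : ℝ))
          * Fpoly (K - 1) i x y
        - 2 * (i : ℝ) * ((2 * K + 1 : ℝ) - 2 - (i : ℝ))
          * Gpoly (K - 1) (2 * K + 1 - 3 - i) x y
        + (i : ℝ) * ((i : ℝ) - 1) * Fpoly (K - 1) (i - 2) x y := by
  have hd : (i:ℚ) * (2*(K:ℚ) - 1 - (i:ℚ)) = 0 ∨ 2*(K-1)+1-2-(2*K+1-3-i) = i - 1 := by
    by_cases h0 : i = 0
    · left; simp [h0]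
    · by_cases h1 : i = 2*K - 1
      · left
        subst h1
        rw [Nat.cast_sub (by omega : 1 ≤ 2*K)]
        push_cast
        ring
      · right; omega
  intro x y
  simp only [Fpoly, Gpoly]
  rw [deriv2_sum]
  rw [show K-1-1 = K-2 by omega]
  rw [shift_sum K hK]
  rw [Finset.mul_sum, Finset.mul_sum, Finset.mul_sum,
    ← Finset.sum_sub_distrib, ← Finset.sum_add_distrib]
  refine Finset.sum_congr rfl fun u hu => ?_
  simp only [Finset.mem_Icc] at hu
  have hK3 : 3 ≤ K := by omega
  have hqr := congrArg (fun q : ℚ => (q:ℝ))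
    (key_s6 K i u (2*(K-1)+1-2-(2*K+1-3-i)) hu.1 hu.2 hK3 hd)
  rw [show 2*K - 2*(u+1) = 2*(K-1) - 2*u by omega,
      show 2*(u+1)-1-1-1 = 2*u-1 by omega,
      show 2*(u+1)-1-1 = 2*u by omega,
      show 2*(u+1)-1 = 2*u+1 by omega]
  push_cast at hqr ⊢
  linear_combination (x ^ (2*(K-1) - 2*u) * y ^ (2*u - 1)) * hqr
end

section
/- Let k = 2K+1 ≥ 5 be an odd integer and let i be an integer with 0 ≤ i ≤ k-2. Then F_k^{(i)} = G_k^{(i)}, i.e. for every s with 1 ≤ s ≤ K-1, (-1) · ∑_{n=0}^{k-2s} C(i, k-2s-n) · C(n+2s-2, n) · B_n = ∑_{n=0}^{k-2s} C(k-2-i, k-2s-n) · C(n+2s-2, n) · B_n. -/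
private def Fb (r j m : ℕ) : ℚ :=
  ∑ n ∈ Finset.range (m+1),
    (j.choose (m-n) : ℚ) * ((n+r).choose n : ℚ) * bernoulli n

private lemma Fb_zero_right (r j : ℕ) : Fb r j 0 = 1 := by
  simp [Fb]

private lemma Fb_succ (r j m : ℕ) : Fb r (j+1) (m+1) = Fb r j (m+1) + Fb r j m := by
  unfold Fb
  rw [Finset.sum_range_succ,
    Finset.sum_range_succ (f := fun n =>
      (j.choose (m+1-n) : ℚ) * ((n+r).choose n : ℚ) * bernoulli n)]
  have h : ∀ n ∈ Finset.range (m+1),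
      ((j+1).choose (m+1-n) : ℚ) * ((n+r).choose n : ℚ) * bernoulli n
      = (j.choose (m+1-n) : ℚ) * ((n+r).choose n : ℚ) * bernoulli n
        + (j.choose (m-n) : ℚ) * ((n+r).choose n : ℚ) * bernoulli n := by
    intro n hn
    rw [Finset.mem_range] at hn
    have hmn : m + 1 - n = (m - n) + 1 := by omega
    rw [hmn, Nat.choose_succ_succ']
    push_cast
    ring
  rw [Finset.sum_congr rfl h, Finset.sum_add_distrib]
  simp
  ring

private lemma Fb_left_zero (r m : ℕ) :
    Fb r 0 m = ((m+r).choose m : ℚ) * bernoulli m := by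
  unfold Fb
  rw [Finset.sum_range_succ]
  have h : ∀ n ∈ Finset.range m,
      ((0:ℕ).choose (m-n) : ℚ) * ((n+r).choose n : ℚ) * bernoulli n = 0 := by
    intro n hn
    rw [Finset.mem_range] at hn
    rw [Nat.choose_eq_zero_of_lt (by omega)]
    simp
  rw [Finset.sum_eq_zero h]
  simp

private lemma Fb_left_max (r m : ℕ) :
    Fb r (m+r) m = ((m+r).choose m : ℚ) * (bernoulli m + if m = 1 then 1 else 0) := by
  unfold Fb
  have h : ∀ n ∈ Finset.range (m+1),
      ((m+r).choose (m-n) : ℚ) * ((n+r).choose n : ℚ) * bernoulli n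
      = ((m+r).choose m : ℚ) * ((m.choose n : ℚ) * bernoulli n) := by
    intro n hn
    rw [Finset.mem_range] at hn
    have hn' : n ≤ m := by omega
    have hnat : (m+r).choose (m-n) * (n+r).choose n = (m+r).choose m * m.choose n := by
      have e1 : (m+r).choose (m-n) = (m+r).choose (n+r) := by
        have := Nat.choose_symm (n := m+r) (k := m-n) (by omega)
        rw [show m + r - (m - n) = n + r from by omega] at this
        exact this.symm
      have e2 : (n+r).choose n = (n+r).choose r := by
        have := Nat.choose_symm (n := n+r) (k := n) (by omega)
        rw [show n + r - n = r from by omega] at this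
        exact this.symm
      have e3 : (m+r).choose r = (m+r).choose m := by
        have := Nat.choose_symm (n := m+r) (k := r) (by omega)
        rw [show m + r - r = m from by omega] at this
        exact this.symm
      have hc := Nat.choose_mul (n := m+r) (k := n+r) (s := r)
        (by omega)
      rw [e1, e2, hc, show m + r - r = m from by omega,
        show n + r - r = n from by omega, e3]
    have hq := congrArg (Nat.cast : ℕ → ℚ) hnat
    push_cast at hq
    linear_combination bernoulli n * hq
  rw [Finset.sum_congr rfl h, ← Finset.mul_sum, Finset.sum_range_succ, sum_bernoulli]
  simp [add_comm]

private lemma Bzero_base (r m : ℕ) :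
    Fb r 0 m + (-1:ℚ)^(m+1) * Fb r (m+r) m = 0 := by
  rw [Fb_left_zero, Fb_left_max]
  rcases Nat.even_or_odd m with he | ho
  · have h1 : ((-1:ℚ))^(m+1) = -1 := by
      rw [pow_succ, he.neg_one_pow]; ring
    have h2 : m ≠ 1 := by rintro rfl; exact (Nat.not_even_one) he
    rw [h1, if_neg h2]; ring
  · have h1 : ((-1:ℚ))^(m+1) = 1 := by
      exact (Even.neg_one_pow (by exact Odd.add_one ho))
    rw [h1]
    by_cases hm : m = 1
    · subst hm; rw [if_pos rfl, bernoulli_one]; ring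
    · have hmgt : 1 < m := by rcases ho with ⟨t, rfl⟩; omega
      have hb : bernoulli m = 0 := by
        rw [bernoulli_eq_bernoulli'_of_ne_one hm]
        exact bernoulli'_eq_zero_of_odd ho hmgt
      rw [hb, if_neg hm]; ring

private lemma Bzero (r : ℕ) : ∀ i m : ℕ, i ≤ m + r →
    Fb r i m + (-1:ℚ)^(m+1) * Fb r (m + r - i) m = 0 := by
  intro i
  induction i with
  | zero => intro m _; simpa using Bzero_base r m
  | succ i ih =>
    intro m him
    cases m with
    | zero =>
      rw [Fb_zero_right, Fb_zero_right]
      norm_num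
    | succ m' =>
      have hj : m' + 1 + r - (i+1) = m' + r - i := by omega
      have hj1 : m' + 1 + r - i = (m' + r - i) + 1 := by omega
      have ih1 := ih (m'+1) (by omega)
      have ih2 := ih m' (by omega)
      rw [hj1] at ih1
      rw [hj, Fb_succ r i m']
      have hL := Fb_succ r (m' + r - i) m'
      linear_combination ih1 + ih2 - (-1:ℚ)^(m'+1+1) * hL

/-- **`F_k^{(i)} = G_k^{(i)}` (coefficient form).**
For odd `k = 2K+1 ≥ 5` and `0 ≤ i ≤ k-2`, for every `1 ≤ s ≤ K-1`,
`(-1) · ∑_{n=0}^{k-2s} C(i, k-2s-n)·C(n+2s-2, n)·B_n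
  = ∑_{n=0}^{k-2s} C(k-2-i, k-2s-n)·C(n+2s-2, n)·B_n`. -/
theorem Fpoly_eq_Gpoly (K i : ℕ) (hK : 2 ≤ K) (hi : i ≤ 2 * K + 1 - 2) :
    ∀ s : ℕ, 1 ≤ s → s ≤ K - 1 →
      (-1 : ℚ) * ∑ n ∈ Finset.range (2 * K + 1 - 2 * s + 1),
          (Nat.choose i (2 * K + 1 - 2 * s - n) : ℚ)
            * (Nat.choose (n + 2 * s - 2) n : ℚ) * bernoulli n
      = ∑ n ∈ Finset.range (2 * K + 1 - 2 * s + 1),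
          (Nat.choose (2 * K + 1 - 2 - i) (2 * K + 1 - 2 * s - n) : ℚ)
            * (Nat.choose (n + 2 * s - 2) n : ℚ) * bernoulli n := by
  intro s hs1 hs2
  set m := 2 * K + 1 - 2 * s with hm
  set r := 2 * s - 2 with hr
  have e1 : ∑ n ∈ Finset.range (2 * K + 1 - 2 * s + 1),
      (Nat.choose i (2 * K + 1 - 2 * s - n) : ℚ)
        * (Nat.choose (n + 2 * s - 2) n : ℚ) * bernoulli n = Fb r i m := by
    unfold Fb
    refine Finset.sum_congr rfl fun n _ => ?_
    rw [show n + 2 * s - 2 = n + r from by omega]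
  have e2 : ∑ n ∈ Finset.range (2 * K + 1 - 2 * s + 1),
      (Nat.choose (2 * K + 1 - 2 - i) (2 * K + 1 - 2 * s - n) : ℚ)
        * (Nat.choose (n + 2 * s - 2) n : ℚ) * bernoulli n = Fb r (m + r - i) m := by
    unfold Fb
    refine Finset.sum_congr rfl fun n _ => ?_
    rw [show n + 2 * s - 2 = n + r from by omega,
      show 2 * K + 1 - 2 - i = m + r - i from by omega]
  rw [e1, e2]
  have h := Bzero r i m (by omega)
  have hsign : ((-1:ℚ))^(m+1) = 1 :=
    Even.neg_one_pow ⟨K + 1 - s, by omega⟩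
  rw [hsign, one_mul] at h
  linear_combination -h
end

section
/- Let k = 2K+1 ≥ 5 be an odd integer and let i be an integer with 0 ≤ i ≤ k-2. Then for every fixed real number x, the second derivative with respect to y of the function y ↦ R_k^{(i)}(x-y, y) equals (k-2-i)(k-3-i) · R_{k-2}^{(i)}(x-y, y) - 2i(k-2-i) · R_{k-2}^{(k-3-i)}(x-y, y) + i(i-1) · R_{k-2}^{(i-2)}(x-y, y), where any term whose scalar coefficient vanishes (in particular those with superscript i-2 < 0 when i ≤ 1) is interpreted as zero. -/
lemma hasDerivAt_pq (c x : ℝ) (p q : ℕ) (t : ℝ) :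
    HasDerivAt (fun s : ℝ => c * ((x - s) ^ p * s ^ q))
      ((c * -(p : ℝ)) * ((x - t) ^ (p - 1) * t ^ q)
        + (c * (q : ℝ)) * ((x - t) ^ p * t ^ (q - 1))) t := by
  have h1 : HasDerivAt (fun s : ℝ => x - s) (-1) t := by
    simpa using (hasDerivAt_id t).const_sub x
  have h2 : HasDerivAt (fun s : ℝ => (x - s) ^ p) (((p : ℝ) * (x - t) ^ (p - 1)) * -1) t :=
    (hasDerivAt_pow p (x - t)).comp t h1
  have h3 := hasDerivAt_pow q t
  have h4 := (h2.mul h3).const_mul c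
  refine h4.congr_deriv ?_
  ring

/-- clean second derivative of a single pq-pair coming from the first derivative. -/
lemma deriv2_pq (c x : ℝ) (p q : ℕ) (y : ℝ) :
    deriv (fun t : ℝ => (c * -(p : ℝ)) * ((x - t) ^ (p - 1) * t ^ q)
        + (c * (q : ℝ)) * ((x - t) ^ p * t ^ (q - 1))) y
      = c * ((p : ℝ) * ((p : ℝ) - 1) * (x - y) ^ (p - 2) * y ^ q
          - 2 * (p : ℝ) * (q : ℝ) * (x - y) ^ (p - 1) * y ^ (q - 1)
          + (q : ℝ) * ((q : ℝ) - 1) * (x - y) ^ p * y ^ (q - 2)) := by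
  rw [((hasDerivAt_pq (c * -(p : ℝ)) x (p - 1) q y).fun_add
      (hasDerivAt_pq (c * (q : ℝ)) x p (q - 1) y)).deriv]
  rcases p with _ | _ | p <;> rcases q with _ | _ | q <;>
    · simp only [Nat.add_sub_cancel, Nat.succ_sub_succ, Nat.sub_zero, Nat.zero_sub, Nat.sub_self,
        show ∀ n : ℕ, n + 2 - 1 = n + 1 from fun n => rfl, Nat.cast_zero, Nat.cast_one, pow_zero]
      push_cast
      ring

lemma diff_pq (c x : ℝ) (p q : ℕ) : Differentiable ℝ (fun s : ℝ => c * ((x - s) ^ p * s ^ q)) :=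
  fun t => (hasDerivAt_pq c x p q t).differentiableAt

lemma diff_pq2 (c x : ℝ) (p q : ℕ) (d : ℝ) (p' q' : ℕ) :
    Differentiable ℝ (fun t : ℝ => c * ((x - t) ^ p * t ^ q) + d * ((x - t) ^ p' * t ^ q')) :=
  (diff_pq c x p q).add (diff_pq d x p' q')

lemma deriv2_sum4 (c1 c2 c3 c4 x : ℝ) (p1 q1 p2 q2 p3 q3 p4 q4 : ℕ) (y : ℝ) :
    deriv (deriv (fun t : ℝ => c1 * ((x - t) ^ p1 * t ^ q1) + c2 * ((x - t) ^ p2 * t ^ q2)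
        + c3 * ((x - t) ^ p3 * t ^ q3) + c4 * ((x - t) ^ p4 * t ^ q4))) y
      = c1 * ((p1 : ℝ) * ((p1 : ℝ) - 1) * (x - y) ^ (p1 - 2) * y ^ q1
          - 2 * (p1 : ℝ) * (q1 : ℝ) * (x - y) ^ (p1 - 1) * y ^ (q1 - 1)
          + (q1 : ℝ) * ((q1 : ℝ) - 1) * (x - y) ^ p1 * y ^ (q1 - 2))
      + c2 * ((p2 : ℝ) * ((p2 : ℝ) - 1) * (x - y) ^ (p2 - 2) * y ^ q2
          - 2 * (p2 : ℝ) * (q2 : ℝ) * (x - y) ^ (p2 - 1) * y ^ (q2 - 1)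
          + (q2 : ℝ) * ((q2 : ℝ) - 1) * (x - y) ^ p2 * y ^ (q2 - 2))
      + c3 * ((p3 : ℝ) * ((p3 : ℝ) - 1) * (x - y) ^ (p3 - 2) * y ^ q3
          - 2 * (p3 : ℝ) * (q3 : ℝ) * (x - y) ^ (p3 - 1) * y ^ (q3 - 1)
          + (q3 : ℝ) * ((q3 : ℝ) - 1) * (x - y) ^ p3 * y ^ (q3 - 2))
      + c4 * ((p4 : ℝ) * ((p4 : ℝ) - 1) * (x - y) ^ (p4 - 2) * y ^ q4
          - 2 * (p4 : ℝ) * (q4 : ℝ) * (x - y) ^ (p4 - 1) * y ^ (q4 - 1)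
          + (q4 : ℝ) * ((q4 : ℝ) - 1) * (x - y) ^ p4 * y ^ (q4 - 2)) := by
  have hfd : deriv (fun t : ℝ => c1 * ((x - t) ^ p1 * t ^ q1) + c2 * ((x - t) ^ p2 * t ^ q2)
        + c3 * ((x - t) ^ p3 * t ^ q3) + c4 * ((x - t) ^ p4 * t ^ q4))
      = fun t : ℝ =>
        ((c1 * -(p1 : ℝ)) * ((x - t) ^ (p1 - 1) * t ^ q1)
          + (c1 * (q1 : ℝ)) * ((x - t) ^ p1 * t ^ (q1 - 1)))
        + ((c2 * -(p2 : ℝ)) * ((x - t) ^ (p2 - 1) * t ^ q2)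
          + (c2 * (q2 : ℝ)) * ((x - t) ^ p2 * t ^ (q2 - 1)))
        + ((c3 * -(p3 : ℝ)) * ((x - t) ^ (p3 - 1) * t ^ q3)
          + (c3 * (q3 : ℝ)) * ((x - t) ^ p3 * t ^ (q3 - 1)))
        + ((c4 * -(p4 : ℝ)) * ((x - t) ^ (p4 - 1) * t ^ q4)
          + (c4 * (q4 : ℝ)) * ((x - t) ^ p4 * t ^ (q4 - 1))) := by
    funext t
    exact ((((hasDerivAt_pq c1 x p1 q1 t).add (hasDerivAt_pq c2 x p2 q2 t)).add
      (hasDerivAt_pq c3 x p3 q3 t)).add (hasDerivAt_pq c4 x p4 q4 t)).deriv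
  rw [hfd]
  rw [deriv_fun_add (((diff_pq2 _ x _ _ _ _ _).fun_add (diff_pq2 _ x _ _ _ _ _)).fun_add
        (diff_pq2 _ x _ _ _ _ _) y) (diff_pq2 _ x _ _ _ _ _ y),
    deriv_fun_add ((diff_pq2 _ x _ _ _ _ _).fun_add (diff_pq2 _ x _ _ _ _ _) y)
      (diff_pq2 _ x _ _ _ _ _ y),
    deriv_fun_add (diff_pq2 _ x _ _ _ _ _ y) (diff_pq2 _ x _ _ _ _ _ y),
    deriv2_pq, deriv2_pq, deriv2_pq, deriv2_pq]

set_option maxHeartbeats 2000000 in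
/-- **Second derivative of `R` in `y`.**
For odd `k = 2K+1 ≥ 5` and `0 ≤ i ≤ k-2`, for every fixed real `x`,
`∂²/∂y² (R_k^{(i)}(x-y,y)) = (k-2-i)(k-3-i)·R_{k-2}^{(i)}(x-y,y)
  - 2i(k-2-i)·R_{k-2}^{(k-3-i)}(x-y,y) + i(i-1)·R_{k-2}^{(i-2)}(x-y,y)`
(superscripts are truncated natural subtractions, which is harmless since the
corresponding scalar coefficients then vanish). -/
theorem Rpoly_second_deriv (K i : ℕ) (hK : 2 ≤ K) (hi : i ≤ 2 * K + 1 - 2) :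
    ∀ x y : ℝ, deriv (deriv (fun t : ℝ => Rpoly (2 * K + 1) i (x - t) t)) y =
      ((2 * K + 1 : ℝ) - 2 - (i : ℝ)) * ((2 * K + 1 : ℝ) - 3 - (i : ℝ))
          * Rpoly (2 * K + 1 - 2) i (x - y) y
        - 2 * (i : ℝ) * ((2 * K + 1 : ℝ) - 2 - (i : ℝ))
          * Rpoly (2 * K + 1 - 2) (2 * K + 1 - 3 - i) (x - y) y
        + (i : ℝ) * ((i : ℝ) - 1) * Rpoly (2 * K + 1 - 2) (i - 2) (x - y) y := by
  intro x y
  have hfun : (fun t : ℝ => Rpoly (2 * K + 1) i (x - t) t)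
      = fun t : ℝ =>
        (-((((2 * K + 1 : ℕ) : ℝ) - 2 - 2 * (i : ℝ)) / (((2 * K + 1 : ℕ) : ℝ) - 2)))
          * ((x - t) ^ (2 * K + 1 - 2) * t ^ 0)
        + ((-1 : ℝ) ^ i) * ((x - t) ^ (2 * K + 1 - 2 - i) * t ^ i)
        + ((-1 : ℝ) ^ i) * ((x - t) ^ i * t ^ (2 * K + 1 - 2 - i))
        + (-((((2 * K + 1 : ℕ) : ℝ) - 2 - 2 * (i : ℝ)) / (((2 * K + 1 : ℕ) : ℝ) - 2)))
          * ((x - t) ^ 0 * t ^ (2 * K + 1 - 2)) := by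
    funext t
    simp only [Rpoly]
    ring
  rw [hfun, deriv2_sum4]
  obtain h | h | h | h | h :
      i = 0 ∨ i = 1 ∨ (2 ≤ i ∧ i + 3 ≤ 2 * K) ∨ i = 2 * K - 2 ∨ i = 2 * K - 1 := by omega
  · -- i = 0
    subst h
    obtain ⟨c, rfl⟩ : ∃ c, K = c + 2 := ⟨K - 2, by omega⟩
    simp only [Rpoly, Nat.sub_zero, Nat.zero_sub, pow_zero,
      show 2 * (c + 2) + 1 - 2 = 2 * c + 3 by omega,
      show 2 * c + 3 - 1 = 2 * c + 2 by omega,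
      show 2 * c + 3 - 2 = 2 * c + 1 by omega,
      show 2 * (c + 2) + 1 - 3 - 0 = 2 * c + 2 by omega,
      show 2 * c + 1 - (2 * c + 2) = 0 by omega,
      show 0 - 1 = 0 by omega, show 0 - 2 = 0 by omega]
    rw [show ((-1 : ℝ)) ^ (2 * c + 2) = 1 from Even.neg_one_pow ⟨c + 1, by ring⟩]
    push_cast
    have hc0 : (0 : ℝ) ≤ (c : ℝ) := Nat.cast_nonneg c
    have d1 : ((2 : ℝ) * ((c : ℝ) + 2) + 1 - 2) ≠ 0 := by intro hc; linarith
    have d2 : ((2 : ℝ) * (c : ℝ) + 3 - 2) ≠ 0 := by intro hc; linarith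
    field_simp
    try ring
  · -- i = 1
    subst h
    obtain ⟨c, rfl⟩ : ∃ c, K = c + 2 := ⟨K - 2, by omega⟩
    simp only [Rpoly, Nat.sub_zero, Nat.zero_sub, pow_zero, pow_one,
      show 2 * (c + 2) + 1 - 2 = 2 * c + 3 by omega,
      show 2 * c + 3 - 1 = 2 * c + 2 by omega,
      show 2 * c + 3 - 2 = 2 * c + 1 by omega,
      show 2 * (c + 2) + 1 - 2 - 1 = 2 * c + 2 by omega,
      show 2 * c + 2 - 1 = 2 * c + 1 by omega,
      show 2 * c + 2 - 2 = 2 * c by omega,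
      show 2 * (c + 2) + 1 - 3 - 1 = 2 * c + 1 by omega,
      show 2 * c + 1 - 1 = 2 * c by omega,
      show 2 * c + 1 - (2 * c + 1) = 0 by omega,
      show (1 : ℕ) - 1 = 0 by omega, show (1 : ℕ) - 2 = 0 by omega]
    rw [show ((-1 : ℝ)) ^ (2 * c + 1) = -1 from Odd.neg_one_pow ⟨c, by ring⟩]
    push_cast
    have hc0 : (0 : ℝ) ≤ (c : ℝ) := Nat.cast_nonneg c
    have d1 : ((2 : ℝ) * ((c : ℝ) + 2) + 1 - 2) ≠ 0 := by intro hc; linarith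
    have d2 : ((2 : ℝ) * (c : ℝ) + 3 - 2) ≠ 0 := by intro hc; linarith
    field_simp
    try ring
  · -- generic case
    obtain ⟨h2, h3⟩ := h
    obtain ⟨m, rfl⟩ : ∃ m, i = m + 2 := ⟨i - 2, by omega⟩
    obtain ⟨b, hb⟩ : ∃ b, 2 * K = m + b + 5 := ⟨2 * K - m - 5, by omega⟩
    have hbc : (2 : ℝ) * (K : ℝ) = (m : ℝ) + (b : ℝ) + 5 := by exact_mod_cast hb
    simp only [Rpoly,
      show 2 * K + 1 - 2 = m + b + 4 by omega,
      show m + b + 4 - 1 = m + b + 3 by omega,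
      show m + b + 4 - 2 = m + b + 2 by omega,
      show 2 * K + 1 - 2 - (m + 2) = b + 2 by omega,
      show m + b + 4 - (m + 2) = b + 2 by omega,
      show b + 2 - 1 = b + 1 by omega,
      show b + 2 - 2 = b by omega,
      show m + 2 - 1 = m + 1 by omega,
      show m + 2 - 2 = m by omega,
      show 2 * K + 1 - 3 - (m + 2) = b + 1 by omega,
      show m + b + 2 - (m + 2) = b by omega,
      show m + b + 2 - (b + 1) = m + 1 by omega,
      show m + b + 2 - m = b + 2 by omega]
    push_cast
    rw [show (2 : ℝ) * (K : ℝ) = (m : ℝ) + (b : ℝ) + 5 from hbc]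
    have heven : (-1 : ℝ) ^ (b + 1) * (-1 : ℝ) ^ m = 1 := by
      rw [← pow_add]
      exact Even.neg_one_pow ⟨K - 2, by omega⟩
    have hm2 : (-1 : ℝ) ^ m * (-1 : ℝ) ^ m = 1 := by
      rw [← pow_add]
      exact Even.neg_one_pow ⟨m, rfl⟩
    have hpar : (-1 : ℝ) ^ (b + 1) = (-1 : ℝ) ^ m := by
      linear_combination ((-1 : ℝ) ^ m) * heven - ((-1 : ℝ) ^ (b + 1)) * hm2
    rw [hpar]
    have hm0 : (0 : ℝ) ≤ (m : ℝ) := Nat.cast_nonneg m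
    have hb0 : (0 : ℝ) ≤ (b : ℝ) := Nat.cast_nonneg b
    have d1 : ((m : ℝ) + (b : ℝ) + 5 + 1 - 2) ≠ 0 := by intro hc; linarith
    have d2 : ((m : ℝ) + (b : ℝ) + 4 - 2) ≠ 0 := by intro hc; linarith
    field_simp
    try ring
  · -- i = 2K - 2
    subst h
    obtain ⟨c, rfl⟩ : ∃ c, K = c + 2 := ⟨K - 2, by omega⟩
    simp only [Rpoly, Nat.sub_zero, Nat.zero_sub, pow_zero, pow_one,
      show 2 * (c + 2) - 2 = 2 * c + 2 by omega,
      show 2 * (c + 2) + 1 - 2 = 2 * c + 3 by omega,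
      show 2 * c + 3 - 1 = 2 * c + 2 by omega,
      show 2 * c + 3 - 2 = 2 * c + 1 by omega,
      show 2 * (c + 2) + 1 - 2 - (2 * c + 2) = 1 by omega,
      show 2 * c + 3 - (2 * c + 2) = 1 by omega,
      show (1 : ℕ) - 1 = 0 by omega, show (1 : ℕ) - 2 = 0 by omega,
      show 2 * c + 2 - 1 = 2 * c + 1 by omega,
      show 2 * c + 2 - 2 = 2 * c by omega,
      show 2 * (c + 2) + 1 - 3 - (2 * c + 2) = 0 by omega,
      show 2 * c + 1 - 0 = 2 * c + 1 by omega,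
      show 2 * c + 1 - (2 * c + 2) = 0 by omega,
      show 2 * c + 1 - (2 * c) = 1 by omega,
      show 0 - 1 = 0 by omega, show 0 - 2 = 0 by omega]
    rw [show ((-1 : ℝ)) ^ (2 * c + 2) = 1 from Even.neg_one_pow ⟨c + 1, by ring⟩,
      show ((-1 : ℝ)) ^ (2 * c) = 1 from Even.neg_one_pow ⟨c, by ring⟩]
    push_cast
    have hc0 : (0 : ℝ) ≤ (c : ℝ) := Nat.cast_nonneg c
    have d1 : ((2 : ℝ) * ((c : ℝ) + 2) + 1 - 2) ≠ 0 := by intro hc; linarith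
    have d2 : ((2 : ℝ) * (c : ℝ) + 3 - 2) ≠ 0 := by intro hc; linarith
    field_simp
    try ring
  · -- i = 2K - 1
    subst h
    obtain ⟨c, rfl⟩ : ∃ c, K = c + 2 := ⟨K - 2, by omega⟩
    simp only [Rpoly, Nat.sub_zero, Nat.zero_sub, pow_zero, pow_one,
      show 2 * (c + 2) - 1 = 2 * c + 3 by omega,
      show 2 * (c + 2) + 1 - 2 = 2 * c + 3 by omega,
      show 2 * c + 3 - 1 = 2 * c + 2 by omega,
      show 2 * c + 3 - 2 = 2 * c + 1 by omega,
      show 2 * (c + 2) + 1 - 2 - (2 * c + 3) = 0 by omega,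
      show 2 * c + 3 - (2 * c + 3) = 0 by omega,
      show 2 * (c + 2) + 1 - 3 - (2 * c + 3) = 0 by omega,
      show 2 * c + 1 - 0 = 2 * c + 1 by omega,
      show 2 * c + 1 - (2 * c + 3) = 0 by omega,
      show 2 * c + 1 - (2 * c + 1) = 0 by omega,
      show 0 - 1 = 0 by omega, show 0 - 2 = 0 by omega]
    rw [show ((-1 : ℝ)) ^ (2 * c + 3) = -1 from Odd.neg_one_pow ⟨c + 1, by ring⟩,
      show ((-1 : ℝ)) ^ (2 * c + 1) = -1 from Odd.neg_one_pow ⟨c, by ring⟩]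
    push_cast
    have hc0 : (0 : ℝ) ≤ (c : ℝ) := Nat.cast_nonneg c
    have d1 : ((2 : ℝ) * ((c : ℝ) + 2) + 1 - 2) ≠ 0 := by intro hc; linarith
    have d2 : ((2 : ℝ) * (c : ℝ) + 3 - 2) ≠ 0 := by intro hc; linarith
    field_simp
    try ring
end

section
/- (Carlitz's symmetric Bernoulli number identity.) For all positive integers m and n, (-1)^m · ∑_{k=0}^{m} C(m, k) · B_{n+k} = (-1)^n · ∑_{k=0}^{n} C(n, k) · B_{m+k}. -/
section CarlitzAux
open Polynomial Finset

/-- The Bernoulli umbral functional: `X^j ↦ Bⱼ`. -/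
noncomputable def bernUmbral : ℚ[X] →ₗ[ℚ] ℚ :=
  Polynomial.lsum fun j => LinearMap.toSpanSingleton ℚ ℚ (_root_.bernoulli j)

lemma bernUmbral_monomial (n : ℕ) (a : ℚ) :
    bernUmbral (Polynomial.monomial n a) = a * _root_.bernoulli n := by
  simp [bernUmbral, Polynomial.lsum_apply, Polynomial.sum_monomial_index,
    LinearMap.toSpanSingleton_apply, smul_eq_mul]

lemma sum_choose_bernoulli_s12 (n : ℕ) :
    (∑ k ∈ range (n + 1), (n.choose k : ℚ) * _root_.bernoulli k) = bernoulli' n := by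
  rw [Finset.sum_range_succ, _root_.sum_bernoulli]
  rcases eq_or_ne n 1 with h | h
  · subst h; norm_num [_root_.bernoulli_one, bernoulli'_one]
  · rw [bernoulli_eq_bernoulli'_of_ne_one h, if_neg h, zero_add, Nat.choose_self,
      Nat.cast_one, one_mul]

lemma bernUmbral_X_add_one_pow (n : ℕ) :
    bernUmbral (((X : ℚ[X]) + 1) ^ n) = bernoulli' n := by
  rw [add_pow, map_sum, ← sum_choose_bernoulli_s12 n]
  refine Finset.sum_congr rfl fun k hk => ?_
  have : (X : ℚ[X]) ^ k * 1 ^ (n - k) * (n.choose k : ℚ[X])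
      = Polynomial.monomial k ((n.choose k : ℚ)) := by
    rw [one_pow, mul_one, ← Polynomial.C_eq_natCast, mul_comm,
      Polynomial.C_mul_X_pow_eq_monomial]
  rw [this, bernUmbral_monomial, mul_comm]

/-- Key reflection property: `L(p(-X-1)) = L(p)`. -/
lemma bernUmbral_comp_reflect (p : ℚ[X]) :
    bernUmbral (p.comp (-(X + 1))) = bernUmbral p := by
  induction p using Polynomial.induction_on' with
  | add p q hp hq => rw [Polynomial.add_comp, map_add, map_add, hp, hq]
  | monomial n a =>
      rw [Polynomial.monomial_comp]
      have h1 : (-(X + 1) : ℚ[X]) ^ n = (-1 : ℚ[X]) ^ n * (X + 1) ^ n := by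
        rw [← neg_one_mul, mul_pow]
      have h2 : ((-1 : ℚ[X]) ^ n) = Polynomial.C ((-1 : ℚ) ^ n) := by simp
      rw [h1, h2, ← mul_assoc, ← Polynomial.C_mul, ← Polynomial.smul_eq_C_mul, map_smul,
        bernUmbral_X_add_one_pow, bernUmbral_monomial, smul_eq_mul]
      rw [_root_.bernoulli]
      ring

lemma bernUmbral_prod (m n : ℕ) :
    bernUmbral ((X : ℚ[X]) ^ n * (X + 1) ^ m)
      = ∑ k ∈ range (m + 1), (m.choose k : ℚ) * _root_.bernoulli (n + k) := by
  rw [add_pow, Finset.mul_sum, map_sum]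
  refine Finset.sum_congr rfl fun k hk => ?_
  have : (X : ℚ[X]) ^ n * ((X : ℚ[X]) ^ k * 1 ^ (m - k) * (m.choose k : ℚ[X]))
      = Polynomial.monomial (n + k) ((m.choose k : ℚ)) := by
    rw [one_pow, mul_one, ← Polynomial.C_eq_natCast, ← mul_assoc, ← pow_add, mul_comm,
      Polynomial.C_mul_X_pow_eq_monomial]
  rw [this, bernUmbral_monomial, mul_comm]

end CarlitzAux

open scoped Polynomial in
/-- **Carlitz's symmetric Bernoulli number identity.**
For all positive integers `m` and `n`,
`(-1)^m · ∑_{k=0}^{m} C(m,k)·B_{n+k} = (-1)^n · ∑_{k=0}^{n} C(n,k)·B_{m+k}`. -/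
theorem carlitz_symmetric_bernoulli (m n : ℕ) (hm : 0 < m) (hn : 0 < n) :
    (-1 : ℚ) ^ m * ∑ k ∈ Finset.range (m + 1), (Nat.choose m k : ℚ) * bernoulli (n + k)
      = (-1 : ℚ) ^ n * ∑ k ∈ Finset.range (n + 1), (Nat.choose n k : ℚ) * bernoulli (m + k) := by
  have key : ((Polynomial.X : ℚ[X]) ^ n * (Polynomial.X + 1) ^ m).comp (-(Polynomial.X + 1))
      = Polynomial.C ((-1 : ℚ) ^ (m + n)) * ((Polynomial.X : ℚ[X]) ^ m * (Polynomial.X + 1) ^ n) := by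
    rw [Polynomial.mul_comp, Polynomial.pow_comp, Polynomial.pow_comp, Polynomial.X_comp,
      Polynomial.add_comp, Polynomial.X_comp, Polynomial.one_comp]
    have e1 : (-(Polynomial.X + 1) + 1 : ℚ[X]) = -Polynomial.X := by ring
    have e2 : (-(Polynomial.X + 1) : ℚ[X]) ^ n = (-1 : ℚ[X]) ^ n * (Polynomial.X + 1) ^ n := by
      rw [← neg_one_mul, mul_pow]
    have e3 : (-Polynomial.X : ℚ[X]) ^ m = (-1 : ℚ[X]) ^ m * Polynomial.X ^ m := by
      rw [← neg_one_mul, mul_pow]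
    have hC : (Polynomial.C ((-1 : ℚ) ^ (m + n)) : ℚ[X]) = (-1 : ℚ[X]) ^ (m + n) := by simp
    rw [e1, e2, e3, hC]
    ring
  have h := bernUmbral_comp_reflect ((Polynomial.X : ℚ[X]) ^ n * (Polynomial.X + 1) ^ m)
  rw [key, ← Polynomial.smul_eq_C_mul, map_smul, smul_eq_mul,
    bernUmbral_prod, bernUmbral_prod] at h
  have hsq : ((-1 : ℚ) ^ m) * ((-1 : ℚ) ^ (m + n)) = (-1 : ℚ) ^ n := by
    rw [← pow_add]
    have : m + (m + n) = 2 * m + n := by ring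
    rw [this, pow_add, pow_mul]
    norm_num
  calc (-1 : ℚ) ^ m * ∑ k ∈ Finset.range (m + 1), (Nat.choose m k : ℚ) * _root_.bernoulli (n + k)
      = (-1 : ℚ) ^ m * ((-1 : ℚ) ^ (m + n)
          * ∑ k ∈ Finset.range (n + 1), (Nat.choose n k : ℚ) * _root_.bernoulli (m + k)) := by
        rw [h]
    _ = (-1 : ℚ) ^ n * ∑ k ∈ Finset.range (n + 1), (Nat.choose n k : ℚ) * _root_.bernoulli (m + k) := by
        rw [← mul_assoc, hsq]
end
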